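/- arXiv:1503.02038 — 6 statements merged into one kernel-verified Lean document; each statement's English description precedes it below -/
import Mathlib

section
/- For any ideal I ⊆ R = ℂ[x_1,…,x_N] and any polynomial f ∈ R: f lies in the contraction IR_0 ∩ R if and only if q(f) = 0 for every functional q in the Macaulay dual space D_0[I]. -/
set_option maxHeartbeats 1000000
set_option synthInstance.maxHeartbeats 1000000


open MvPolynomial

noncomputable section

/-- The polynomial ring `R = ℂ[x_1,…,x_N]`, with variables indexed by `Fin N`. -/
abbrev PolyR (N : ℕ) := MvPolynomial (Fin N) ℂ

/-- A dual functional `q = Σ_α c_α ∂^α` is encoded by its coefficient vector, i.e.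
by an element of `MvPolynomial (Fin N) ℂ` (which is exactly the space of finitely
supported functions `ℕ^N →₀ ℂ`).  Its application to a polynomial `f` is
`q(f) = Σ_α c_α · (coefficient of x^α in f)`. -/
def dapply {N : ℕ} (q f : PolyR N) : ℂ := ∑ α ∈ f.support, q.coeff α * f.coeff α

/-- The Macaulay dual space `D_0[I]` of an ideal `I`, as a `ℂ`-subspace of `D_0`. -/
def dualSpace {N : ℕ} (I : Ideal (PolyR N)) : Submodule ℂ (PolyR N) where
  carrier := {q | ∀ f ∈ I, dapply q f = 0}
  zero_mem' := by intro f _; simp [dapply]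
  add_mem' := by
    intro a b ha hb f hf
    have h : dapply (a + b) f = dapply a f + dapply b f := by
      simp [dapply, MvPolynomial.coeff_add, add_mul, Finset.sum_add_distrib]
    rw [h, ha f hf, hb f hf, add_zero]
  smul_mem' := by
    intro c q hq f hf
    have h : dapply (c • q) f = c * dapply q f := by
      simp [dapply, MvPolynomial.coeff_smul, Finset.mul_sum, mul_assoc]
    rw [h, hq f hf, mul_zero]

/-- The subspace of dual functionals all of whose exponents satisfy `P`. -/
def expSupported {N : ℕ} (P : (Fin N →₀ ℕ) → Prop) : Submodule ℂ (PolyR N) where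
  carrier := {q | ∀ α ∈ q.support, P α}
  zero_mem' := by simp
  add_mem' := by
    intro a b ha hb α hα
    rcases Finset.mem_union.mp (MvPolynomial.support_add hα) with h | h
    · exact ha α h
    · exact hb α h
  smul_mem' := by
    intro c q hq α hα
    exact hq α (MvPolynomial.support_smul hα)

/-- The truncated dual space `D_0^k[I]`: functionals in `D_0[I]` of order at most `k`
(in particular `0` belongs to it). -/
def truncDual {N : ℕ} (I : Ideal (PolyR N)) (k : ℕ) : Submodule ℂ (PolyR N) :=
  dualSpace I ⊓ expSupported (fun α => ∑ i, α i ≤ k)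

/-- The eliminating truncated dual space `E_0^d[I, A]`, where the set of variables `A`
is given by a finite set of indices: functionals in `D_0[I]` with `ord_A ≤ d`. -/
def elimDual {N : ℕ} (I : Ideal (PolyR N)) (A : Finset (Fin N)) (d : ℕ) :
    Submodule ℂ (PolyR N) :=
  dualSpace I ⊓ expSupported (fun α => ∑ i ∈ A, α i ≤ d)

open scoped Classical in
/-- The action `g · q` of the polynomial ring on dual functionals, determined by
`(g·q)(f) = q(g·f)`; concretely `g · ∂^α = Σ_{γ ≤ α} g_γ ∂^{α-γ}`. -/
def dmul {N : ℕ} (g q : PolyR N) : PolyR N :=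
  ∑ γ ∈ g.support, ∑ α ∈ q.support,
    if γ ≤ α then (MvPolynomial.monomial (α - γ)) (g.coeff γ * q.coeff α) else 0

/-- The maximal ideal `m = ⟨x_1,…,x_N⟩` of the origin. -/
def mIdeal (N : ℕ) : Ideal (PolyR N) := Ideal.span (Set.range MvPolynomial.X)

/-- The multiplicative set of polynomials not vanishing at the origin. -/
def atOrigin (N : ℕ) : Submonoid (PolyR N) where
  carrier := {g | MvPolynomial.constantCoeff g ≠ 0}
  one_mem' := by simp
  mul_mem' := by
    intro a b ha hb
    simp only [Set.mem_setOf_eq, map_mul]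
    exact mul_ne_zero ha hb

/-- The local ring `R_0` of the origin: the localization of `R` at the maximal ideal
of the origin. -/
abbrev LocR (N : ℕ) := Localization (atOrigin N)

/-- The extension `I·R_0` of an ideal `I ⊆ R` to the local ring of the origin. -/
def extIdeal {N : ℕ} (I : Ideal (PolyR N)) : Ideal (LocR N) :=
  Ideal.map (algebraMap (PolyR N) (LocR N)) I

/-- The contraction `I·R_0 ∩ R` of the extension of `I` back to `R`. -/
def contExt {N : ℕ} (I : Ideal (PolyR N)) : Ideal (PolyR N) :=
  Ideal.comap (algebraMap (PolyR N) (LocR N)) (extIdeal I)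

/-- The local Hilbert function
`H_I(k) = dim_ℂ R/(I + m^{k+1}) − dim_ℂ R/(I + m^k)`
(note that for `k = 0` the subtrahend vanishes since `m^0 = R`). -/
def hilb {N : ℕ} (I : Ideal (PolyR N)) (k : ℕ) : ℕ :=
  Module.finrank ℂ (PolyR N ⧸ (I + mIdeal N ^ (k + 1)))
    - Module.finrank ℂ (PolyR N ⧸ (I + mIdeal N ^ k))

namespace Aux
variable {N : ℕ}

lemma dapply_eq (q f : PolyR N) :
    dapply q f = ∑ α ∈ q.support, q.coeff α * f.coeff α := by
  have h1 : dapply q f = ∑ α ∈ f.support ∪ q.support, q.coeff α * f.coeff α :=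
    Finset.sum_subset Finset.subset_union_left (fun x _ hx => by
      rw [MvPolynomial.notMem_support_iff.mp hx, mul_zero])
  rw [h1, Finset.union_comm]
  exact (Finset.sum_subset Finset.subset_union_left (fun x _ hx => by
    rw [MvPolynomial.notMem_support_iff.mp hx, zero_mul])).symm

lemma dapply_add (q a b : PolyR N) : dapply q (a + b) = dapply q a + dapply q b := by
  simp [dapply_eq, MvPolynomial.coeff_add, mul_add, Finset.sum_add_distrib]

lemma monomial_mem_pow (α : Fin N →₀ ℕ) (c : ℂ) (k : ℕ) (h : k ≤ ∑ i, α i) :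
    (monomial α) c ∈ mIdeal N ^ k := by
  induction k generalizing α with
  | zero => simp
  | succ k ih =>
    have hα : ∃ i, α i ≠ 0 := by
      by_contra h'
      push_neg at h'
      simp only [h', Finset.sum_const_zero] at h
      omega
    obtain ⟨i, hi⟩ := hα
    have hle : Finsupp.single i 1 ≤ α := by
      rw [Finsupp.single_le_iff]; omega
    have heq : (α - Finsupp.single i 1) + Finsupp.single i 1 = α :=
      tsub_add_cancel_of_le hle
    set β : Fin N →₀ ℕ := α - Finsupp.single i 1 with hβ
    have hsum : (∑ j, β j) + 1 = ∑ j, α j := by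
      rw [← heq]
      simp only [Finsupp.add_apply]
      rw [Finset.sum_add_distrib]
      congr 1
      simp [Finsupp.single_apply]
    have hmon : (monomial α) c = (monomial β) c * X i := by
      rw [X, monomial_mul, mul_one, heq]
    rw [hmon, pow_succ]
    exact Ideal.mul_mem_mul (ih _ (by omega)) (Ideal.subset_span ⟨i, rfl⟩)

def lowZero (N k : ℕ) : Ideal (PolyR N) where
  carrier := {f | ∀ α : Fin N →₀ ℕ, (∑ i, α i) < k → f.coeff α = 0}
  zero_mem' := by simp
  add_mem' := by
    intro a b ha hb α hα
    rw [MvPolynomial.coeff_add, ha α hα, hb α hα, add_zero]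
  smul_mem' := by
    intro r f hf α hα
    rw [smul_eq_mul, MvPolynomial.coeff_mul]
    refine Finset.sum_eq_zero fun x hx => ?_
    rw [Finset.HasAntidiagonal.mem_antidiagonal] at hx
    have hle : (∑ i, x.2 i) ≤ ∑ i, α i := Finset.sum_le_sum fun i _ => by
      have : x.1 i + x.2 i = α i := by rw [← hx]; simp
      omega
    rw [hf x.2 (lt_of_le_of_lt hle hα), mul_zero]

lemma mem_lowZero_iff {N k : ℕ} {f : PolyR N} :
    f ∈ lowZero N k ↔ ∀ α : Fin N →₀ ℕ, (∑ i, α i) < k → f.coeff α = 0 := Iff.rfl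

lemma mIdeal_le_lowZero_one : mIdeal N ≤ lowZero N 1 := by
  rw [mIdeal, Ideal.span_le]
  rintro _ ⟨i, rfl⟩
  intro α hα
  have hα0 : α = 0 := by
    ext j
    have h2 : α j ≤ ∑ i, α i :=
      Finset.single_le_sum (fun _ _ => Nat.zero_le _) (Finset.mem_univ j)
    simp only [Finsupp.coe_zero, Pi.zero_apply]
    omega
  subst hα0
  simp [MvPolynomial.coeff_zero_X]

lemma pow_le_lowZero (k : ℕ) : mIdeal N ^ k ≤ lowZero N k := by
  induction k with
  | zero => intro f _ α hα; omega
  | succ k ih =>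
    rw [pow_succ]
    refine Ideal.mul_le.mpr fun a ha b hb => ?_
    intro α hα
    rw [MvPolynomial.coeff_mul]
    refine Finset.sum_eq_zero fun x hx => ?_
    rw [Finset.HasAntidiagonal.mem_antidiagonal] at hx
    have hsum : (∑ i, x.1 i) + (∑ i, x.2 i) = ∑ i, α i := by
      rw [← Finset.sum_add_distrib]
      exact Finset.sum_congr rfl fun i _ => by rw [← hx]; simp
    by_cases h1 : (∑ i, x.1 i) < k
    · rw [ih ha x.1 h1, zero_mul]
    · have h2 : (∑ i, x.2 i) < 1 := by omega
      rw [mIdeal_le_lowZero_one hb x.2 h2, mul_zero]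

lemma mem_mIdeal_of_constantCoeff {f : PolyR N} (h : constantCoeff f = 0) :
    f ∈ mIdeal N := by
  rw [MvPolynomial.as_sum f]
  refine Ideal.sum_mem _ fun α hα => ?_
  have hα0 : α ≠ 0 := by
    rintro rfl
    rw [MvPolynomial.mem_support_iff] at hα
    exact hα h
  have hdeg : 1 ≤ ∑ i, α i := by
    by_contra hd
    push_neg at hd
    refine hα0 (Finsupp.ext fun j => ?_)
    have h2 : α j ≤ ∑ i, α i :=
      Finset.single_le_sum (fun _ _ => Nat.zero_le _) (Finset.mem_univ j)
    simp only [Finsupp.coe_zero, Pi.zero_apply]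
    omega
  simpa [pow_one] using monomial_mem_pow α _ 1 hdeg

lemma mIdeal_eq_ker :
    mIdeal N = RingHom.ker (constantCoeff : PolyR N →+* ℂ) := by
  apply le_antisymm
  · rw [mIdeal, Ideal.span_le]
    rintro _ ⟨i, rfl⟩
    simp [RingHom.mem_ker]
  · intro f hf
    exact mem_mIdeal_of_constantCoeff hf

instance mIdeal_isPrime : (mIdeal N).IsPrime := by
  rw [mIdeal_eq_ker]
  exact RingHom.ker_isPrime _

lemma atOrigin_eq : atOrigin N = (mIdeal N).primeCompl := by
  ext g
  change constantCoeff g ≠ 0 ↔ g ∉ mIdeal N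
  rw [mIdeal_eq_ker]
  simp [RingHom.mem_ker]

instance isLoc : IsLocalization (mIdeal N).primeCompl (LocR N) :=
  atOrigin_eq (N := N) ▸ Localization.isLocalization

instance : IsLocalRing (LocR N) :=
  IsLocalization.AtPrime.isLocalRing (LocR N) (mIdeal N)

instance : IsNoetherianRing (LocR N) :=
  IsLocalization.isNoetherianRing (atOrigin N) (LocR N) inferInstance

lemma geom_unit (g : PolyR N) (hg : constantCoeff g ≠ 0) (k : ℕ) :
    ∃ h : PolyR N, 1 - h * g ∈ mIdeal N ^ k := by
  set c := constantCoeff g with hc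
  set x : PolyR N := 1 - C c⁻¹ * g with hx
  have hxm : x ∈ mIdeal N := by
    apply mem_mIdeal_of_constantCoeff
    simp [hx, ← hc, inv_mul_cancel₀ hg]
  refine ⟨(∑ i ∈ Finset.range k, x ^ i) * C c⁻¹, ?_⟩
  have h1 : (∑ i ∈ Finset.range k, x ^ i) * C c⁻¹ * g
      = (∑ i ∈ Finset.range k, x ^ i) * (1 - x) := by
    rw [mul_assoc]
    congr 1
    rw [hx]; ring
  have h2 : (∑ i ∈ Finset.range k, x ^ i) * (1 - x) = 1 - x ^ k := by
    have := geom_sum_mul x k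
    have h3 : (∑ i ∈ Finset.range k, x ^ i) * (1 - x)
        = -((∑ i ∈ Finset.range k, x ^ i) * (x - 1)) := by ring
    rw [h3, this]; ring
  rw [h1, h2, sub_sub_cancel]
  exact Ideal.pow_mem_pow hxm k

set_option synthInstance.maxHeartbeats 1000000 in
lemma exists_dual (J : Ideal (PolyR N)) (k : ℕ) (hm : mIdeal N ^ k ≤ J)
    (f : PolyR N) (hf : f ∉ J) :
    ∃ q : PolyR N, (∀ g ∈ J, dapply q g = 0) ∧ dapply q f ≠ 0 := by
  set J' : Submodule ℂ (PolyR N) := Submodule.restrictScalars ℂ J with hJ'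
  have hfV : (Submodule.Quotient.mk f : PolyR N ⧸ J') ≠ 0 := by
    rw [Ne, Submodule.Quotient.mk_eq_zero]
    exact hf
  have hexφ : ¬ ∀ φ : Module.Dual ℂ (PolyR N ⧸ J'), φ (Submodule.Quotient.mk f) = 0 := by
    rw [Module.forall_dual_apply_eq_zero_iff]
    exact hfV
  push_neg at hexφ
  obtain ⟨φ, hφ⟩ := hexφ
  set ψ : PolyR N →ₗ[ℂ] ℂ := φ.comp J'.mkQ with hψ
  have hψJ : ∀ g ∈ J, ψ g = 0 := by
    intro g hg
    have : J'.mkQ g = 0 := by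
      rw [Submodule.mkQ_apply, Submodule.Quotient.mk_eq_zero]
      exact hg
    simp [hψ, this]
  have hψf : ψ f ≠ 0 := hφ
  have hψ_high : ∀ α : Fin N →₀ ℕ, k ≤ ∑ i, α i → ψ ((monomial α) 1) = 0 :=
    fun α hα => hψJ _ (hm (monomial_mem_pow α 1 k hα))
  set κ : Fin N →₀ ℕ := Finsupp.equivFunOnFinite.symm (fun _ => k) with hκ
  set q : PolyR N := ∑ α ∈ Finset.Iic κ, (monomial α) (ψ ((monomial α) 1)) with hq
  have hcoeff : ∀ α, q.coeff α
      = if α ∈ Finset.Iic κ then ψ ((monomial α) 1) else 0 := by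
    intro α
    rw [hq, MvPolynomial.coeff_sum]
    simp only [MvPolynomial.coeff_monomial]
    rw [Finset.sum_ite_eq' (Finset.Iic κ) α (fun β => ψ ((monomial β) 1))]
  have key : ∀ g : PolyR N, dapply q g = ψ g := by
    intro g
    conv_rhs => rw [MvPolynomial.as_sum g]
    rw [map_sum, show dapply q g = ∑ α ∈ g.support, q.coeff α * g.coeff α from rfl]
    refine Finset.sum_congr rfl fun α hα => ?_
    have hmono : (monomial α) (g.coeff α) = g.coeff α • (monomial α) (1 : ℂ) := by
      rw [MvPolynomial.smul_monomial, smul_eq_mul, mul_one]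
    rw [hmono, map_smul, smul_eq_mul, hcoeff α]
    by_cases hmem : α ∈ Finset.Iic κ
    · rw [if_pos hmem]; ring
    · rw [if_neg hmem, zero_mul]
      have : k ≤ ∑ i, α i := by
        rw [Finset.mem_Iic] at hmem
        have : ¬ α ≤ κ := hmem
        rw [Finsupp.le_def] at this
        push_neg at this
        obtain ⟨i, hi⟩ := this
        have hκi : κ i = k := by simp [hκ]
        have h2 : α i ≤ ∑ j, α j :=
          Finset.single_le_sum (fun _ _ => Nat.zero_le _) (Finset.mem_univ i)
        omega
      rw [hψ_high α this, mul_zero]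
  exact ⟨q, fun g hg => (key g).trans (hψJ g hg), (key f).symm ▸ hψf⟩

lemma dual_iff (I : Ideal (PolyR N)) (f : PolyR N) :
    (∀ q ∈ dualSpace I, dapply q f = 0) ↔ ∀ k, f ∈ I ⊔ mIdeal N ^ k := by
  constructor
  · intro h k
    by_contra hf
    obtain ⟨q, hq, hqf⟩ := exists_dual (I ⊔ mIdeal N ^ k) k le_sup_right f hf
    exact hqf (h q (fun g hg => hq g (Ideal.mem_sup_left hg)))
  · intro h q hq
    set k := (q.support.sup fun α => ∑ i, α i) + 1 with hk
    obtain ⟨a, ha, b, hb, hab⟩ := Submodule.mem_sup.mp (h k)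
    have hqI : ∀ g ∈ I, dapply q g = 0 := hq
    rw [← hab, dapply_add, hqI a ha, zero_add, dapply_eq]
    refine Finset.sum_eq_zero fun α hα => ?_
    have hlt : (∑ i, α i) < k := Nat.lt_succ_of_le (Finset.le_sup (f := fun α : Fin N →₀ ℕ => ∑ i, α i) hα)
    rw [pow_le_lowZero k hb α hlt, mul_zero]

lemma mem_contExt (I : Ideal (PolyR N)) (f : PolyR N)
    (h : ∀ k, f ∈ I ⊔ mIdeal N ^ k) : f ∈ contExt I := by
  show algebraMap (PolyR N) (LocR N) f ∈ extIdeal I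
  set A := extIdeal I with hA'
  by_cases hA : A = ⊤
  · rw [hA]; trivial
  haveI : Nontrivial (LocR N ⧸ A) := Ideal.Quotient.nontrivial_iff.mpr hA
  haveI : IsLocalRing (LocR N ⧸ A) :=
    IsLocalRing.of_surjective' (Ideal.Quotient.mk A) Ideal.Quotient.mk_surjective
  set M := IsLocalRing.maximalIdeal (LocR N) with hM'
  set π := Ideal.Quotient.mk A with hπ
  have hMQ : Ideal.map π M ≤ IsLocalRing.maximalIdeal (LocR N ⧸ A) := by
    rw [Ideal.map_le_iff_le_comap]
    intro x hx
    rw [Ideal.mem_comap, IsLocalRing.mem_maximalIdeal, mem_nonunits_iff]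
    intro hu
    obtain ⟨b, hb⟩ := hu.exists_right_inv
    obtain ⟨y, rfl⟩ := Ideal.Quotient.mk_surjective b
    have hxy : x * y - 1 ∈ A := by
      rw [← Ideal.Quotient.eq_zero_iff_mem]
      rw [map_sub, map_mul, map_one]
      change π x * π y - 1 = 0
      rw [← hπ] at hb
      rw [hb, sub_self]
    have hAM : A ≤ M := IsLocalRing.le_maximalIdeal hA
    have h1M : (1 : LocR N) ∈ M := by
      have := M.sub_mem (M.mul_mem_right y hx) (hAM hxy)
      simpa using this
    exact (IsLocalRing.maximalIdeal.isMaximal (LocR N)).ne_top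
      ((Ideal.eq_top_iff_one _).mpr h1M)
  have hmM : Ideal.map (algebraMap (PolyR N) (LocR N)) (mIdeal N) ≤ M := by
    rw [Ideal.map_le_iff_le_comap]
    intro g hg
    rw [Ideal.mem_comap, hM', IsLocalRing.mem_maximalIdeal, mem_nonunits_iff,
      IsLocalization.AtPrime.isUnit_to_map_iff (LocR N) (mIdeal N)]
    intro hcon
    exact hcon hg
  have key : π (algebraMap (PolyR N) (LocR N) f)
      ∈ ⨅ n, (IsLocalRing.maximalIdeal (LocR N ⧸ A)) ^ n := by
    rw [Submodule.mem_iInf]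
    intro n
    obtain ⟨a, ha, b, hb, hab⟩ := Submodule.mem_sup.mp (h n)
    have h1 : π (algebraMap (PolyR N) (LocR N) a) = 0 := by
      rw [Ideal.Quotient.eq_zero_iff_mem]
      exact Ideal.mem_map_of_mem _ ha
    have h2 : algebraMap (PolyR N) (LocR N) b ∈ M ^ n := by
      have hb1 : algebraMap (PolyR N) (LocR N) b
          ∈ (Ideal.map (algebraMap (PolyR N) (LocR N)) (mIdeal N)) ^ n := by
        rw [← Ideal.map_pow]
        exact Ideal.mem_map_of_mem _ hb
      exact Ideal.pow_right_mono hmM n hb1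
    have h3 : π (algebraMap (PolyR N) (LocR N) b)
        ∈ (IsLocalRing.maximalIdeal (LocR N ⧸ A)) ^ n := by
      have : π (algebraMap (PolyR N) (LocR N) b) ∈ (Ideal.map π M) ^ n := by
        have h2' := Ideal.mem_map_of_mem π h2
        exact (Ideal.map_pow (S := LocR N ⧸ A) π M n).le h2'
      exact Ideal.pow_right_mono hMQ n this
    rw [← hab, map_add, map_add, h1, zero_add]
    exact h3
  have hK := Ideal.iInf_pow_eq_bot_of_isLocalRing (R := LocR N ⧸ A)
    (IsLocalRing.maximalIdeal (LocR N ⧸ A)) (IsLocalRing.maximalIdeal.isMaximal _).ne_top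
  have key : π (algebraMap (PolyR N) (LocR N) f) ∈ (⊥ : Ideal (LocR N ⧸ A)) := hK.le key
  rw [Ideal.mem_bot] at key
  exact Ideal.Quotient.eq_zero_iff_mem.mp key

end Aux

/-- For any ideal `I ⊆ R` and any `f ∈ R`:
`f ∈ I·R_0 ∩ R` iff `q(f) = 0` for every `q ∈ D_0[I]`. -/
theorem statement1 {N : ℕ} (hN : 1 ≤ N) (I : Ideal (PolyR N)) (f : PolyR N) :
    f ∈ contExt I ↔ ∀ q ∈ dualSpace I, dapply q f = 0 := by
  rw [Aux.dual_iff]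
  constructor
  · intro hf k
    have hmem : algebraMap (PolyR N) (LocR N) f ∈ extIdeal I := hf
    rw [extIdeal, IsLocalization.mem_map_algebraMap_iff (atOrigin N)] at hmem
    obtain ⟨⟨a, s⟩, hx⟩ := hmem
    rw [← map_mul] at hx
    have hle : atOrigin N ≤ nonZeroDivisors (PolyR N) := by
      intro g hg
      have hne : constantCoeff g ≠ 0 := hg
      exact mem_nonZeroDivisors_of_ne_zero (fun h0 => hne (by rw [h0]; simp))
    have hinj : Function.Injective (algebraMap (PolyR N) (LocR N)) :=
      IsLocalization.injective (LocR N) hle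
    have hsf : f * (s : PolyR N) ∈ I := by
      rw [hinj hx]; exact a.2
    obtain ⟨hh, hhg⟩ := Aux.geom_unit (s : PolyR N) s.2 k
    have hrw : f = hh * (f * (s : PolyR N)) + (1 - hh * (s : PolyR N)) * f := by
      ring
    rw [hrw]
    exact Ideal.add_mem _ (Ideal.mem_sup_left (I.mul_mem_left hh hsf))
      (Ideal.mem_sup_right ((mIdeal N ^ k).mul_mem_right f hhg))
  · intro h
    exact Aux.mem_contExt I f h
end
end

section
/- For ideals I_1, I_2 ⊆ R = ℂ[x_1,…,x_N]: the extension I_1R_0 is contained in the extension I_2R_0 if and only if D_0[I_2] ⊆ D_0[I_1]. Consequently the extension IR_0 of an ideal I is uniquely determined by its dual space D_0[I]. -/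
open MvPolynomial

noncomputable section

namespace Statement2Aux

open MvPolynomial

variable {N : ℕ}

/-- total degree of an exponent vector -/
noncomputable def deg (α : Fin N →₀ ℕ) : ℕ := α.sum fun _ n => n

lemma le_deg (α : Fin N →₀ ℕ) (i : Fin N) : α i ≤ deg α := by
  by_cases h : α i = 0
  · simp [h]
  · exact Finset.single_le_sum (fun _ _ => Nat.zero_le _) (Finsupp.mem_support_iff.mpr h)

lemma deg_add (α β : Fin N →₀ ℕ) : deg (α + β) = deg α + deg β := by
  unfold deg
  exact Finsupp.sum_add_index' (fun _ => rfl) (fun _ _ _ => rfl)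

lemma deg_single (i : Fin N) : deg (Finsupp.single i 1) = 1 := by
  unfold deg
  simp [Finsupp.sum_single_index]

lemma dapply_eq (q f : PolyR N) :
    dapply q f = ∑ α ∈ q.support, q.coeff α * f.coeff α := by
  classical
  unfold dapply
  have h1 : ∑ α ∈ f.support, q.coeff α * f.coeff α
      = ∑ α ∈ q.support ∪ f.support, q.coeff α * f.coeff α :=
    Finset.sum_subset Finset.subset_union_right (fun x _ hx => by
      rw [MvPolynomial.notMem_support_iff.mp hx, mul_zero])
  have h2 : ∑ α ∈ q.support, q.coeff α * f.coeff α
      = ∑ α ∈ q.support ∪ f.support, q.coeff α * f.coeff α :=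
    Finset.sum_subset Finset.subset_union_left (fun x _ hx => by
      rw [MvPolynomial.notMem_support_iff.mp hx, zero_mul])
  rw [h1, h2]

lemma dapply_add_right (q f g : PolyR N) :
    dapply q (f + g) = dapply q f + dapply q g := by
  simp [dapply_eq, MvPolynomial.coeff_add, mul_add, Finset.sum_add_distrib]

lemma X_mem_mIdeal (i : Fin N) : (X i : PolyR N) ∈ mIdeal N :=
  Ideal.subset_span ⟨i, rfl⟩

lemma monomial_mem_pow (k : ℕ) :
    ∀ (α : Fin N →₀ ℕ) (c : ℂ), k ≤ deg α → monomial α c ∈ mIdeal N ^ k := by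
  induction k with
  | zero => intro α c _; simp
  | succ k ih =>
    intro α c hk
    have hα : α ≠ 0 := by
      rintro rfl
      simp [deg, Finsupp.sum_zero_index] at hk
    obtain ⟨i, hi⟩ : ∃ i, α i ≠ 0 := by
      by_contra h
      push_neg at h
      exact hα (Finsupp.ext fun i => h i)
    have hle : Finsupp.single i 1 ≤ α := Finsupp.single_le_iff.mpr (Nat.one_le_iff_ne_zero.mpr hi)
    have h1 : Finsupp.single i 1 + (α - Finsupp.single i 1) = α := add_tsub_cancel_of_le hle
    have h2 : k ≤ deg (α - Finsupp.single i 1) := by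
      have := deg_add (Finsupp.single i 1) (α - Finsupp.single i 1)
      rw [h1, deg_single] at this
      omega
    have hmono : (monomial α c : PolyR N)
        = X i * monomial (α - Finsupp.single i 1) c := by
      rw [X, monomial_mul, h1, one_mul]
    rw [hmono, pow_succ']
    exact Ideal.mul_mem_mul (X_mem_mIdeal i) (ih _ _ h2)

lemma mem_pow_of (k : ℕ) (f : PolyR N) (h : ∀ α ∈ f.support, k ≤ deg α) :
    f ∈ mIdeal N ^ k := by
  have hsum : (∑ α ∈ f.support, monomial α (coeff α f)) ∈ mIdeal N ^ k :=
    Ideal.sum_mem _ (fun α hα => monomial_mem_pow k α _ (h α hα))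
  rwa [← MvPolynomial.as_sum f] at hsum

open scoped Classical in
/-- The ideal of polynomials all of whose monomials have degree at least `k`. -/
noncomputable def lowVanish (k : ℕ) : Ideal (PolyR N) where
  carrier := {f | ∀ α ∈ f.support, k ≤ deg α}
  zero_mem' := by simp
  add_mem' := by
    intro a b ha hb α hα
    rcases Finset.mem_union.mp (MvPolynomial.support_add hα) with h | h
    · exact ha α h
    · exact hb α h
  smul_mem' := by
    intro c f hf α hα
    rw [smul_eq_mul] at hα
    rcases Finset.mem_add.mp (MvPolynomial.support_mul c f hα) with ⟨β, _, γ, hγ, rfl⟩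
    have := hf γ hγ
    rw [deg_add]
    omega

lemma mem_lowVanish {k : ℕ} {f : PolyR N} :
    f ∈ lowVanish k ↔ ∀ α ∈ f.support, k ≤ deg α := Iff.rfl

lemma mIdeal_le_lowVanish : mIdeal N ≤ lowVanish 1 := by
  rw [mIdeal, Ideal.span_le]
  rintro _ ⟨i, rfl⟩
  intro α hα
  classical
  rw [MvPolynomial.support_X] at hα
  rw [Finset.mem_singleton.mp hα, deg_single]

lemma pow_le_lowVanish (k : ℕ) : mIdeal N ^ k ≤ lowVanish k := by
  induction k with
  | zero => intro f _ α _; exact Nat.zero_le _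
  | succ k ih =>
    rw [pow_succ]
    refine Ideal.mul_le.mpr (fun r hr s hs => ?_)
    intro α hα
    classical
    rcases Finset.mem_add.mp (MvPolynomial.support_mul r s hα) with ⟨β, hβ, γ, hγ, rfl⟩
    have h1 : k ≤ deg β := ih hr β hβ
    have h2 : 1 ≤ deg γ := mIdeal_le_lowVanish hs γ hγ
    rw [deg_add]
    omega

lemma mem_pow_imp {k : ℕ} {f : PolyR N} (hf : f ∈ mIdeal N ^ k) :
    ∀ α ∈ f.support, k ≤ deg α := pow_le_lowVanish k hf

lemma sub_C_mem (g : PolyR N) : g - C (constantCoeff g) ∈ mIdeal N := by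
  have h := mem_pow_of 1 (g - C (constantCoeff g)) ?_
  · rwa [pow_one] at h
  · intro α hα
    by_contra hlt
    push_neg at hlt
    have hd0 : deg α = 0 := by omega
    have hα0 : α = 0 := by
      ext i
      have h1 := le_deg α i
      simp only [Finsupp.coe_zero, Pi.zero_apply]
      omega
    rw [hα0] at hα
    have : coeff 0 (g - C (constantCoeff g)) = 0 := by
      simp [MvPolynomial.coeff_sub, MvPolynomial.coeff_zero_C, MvPolynomial.constantCoeff_eq]
    exact MvPolynomial.mem_support_iff.mp hα this

lemma mem_sup_pow {I : Ideal (PolyR N)} {f g : PolyR N}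
    (hg : constantCoeff g ≠ 0) (hgf : g * f ∈ I) (k : ℕ) :
    f ∈ I ⊔ mIdeal N ^ k := by
  set c := constantCoeff g with hc
  have key : ∀ k, C (c ^ k) * f ∈ I ⊔ mIdeal N ^ k := by
    intro k
    induction k with
    | zero =>
      refine Submodule.mem_sup_right ?_
      simp [Ideal.one_eq_top]
    | succ k ih =>
      have hdecomp : C (c ^ (k + 1)) * f
          = C (c ^ k) * (g * f) - (g - C c) * (C (c ^ k) * f) := by
        rw [pow_succ, map_mul]
        ring
      rw [hdecomp]
      apply Submodule.sub_mem
      · exact Submodule.mem_sup_left (Ideal.mul_mem_left _ _ hgf)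
      · have h1 : (g - C c) * (C (c ^ k) * f) ∈ mIdeal N * (I ⊔ mIdeal N ^ k) :=
          Ideal.mul_mem_mul (sub_C_mem g) ih
        have h2 : mIdeal N * (I ⊔ mIdeal N ^ k) ≤ I ⊔ mIdeal N ^ (k + 1) := by
          rw [Ideal.mul_sup]
          exact sup_le_sup Ideal.mul_le_right (le_of_eq (pow_succ' _ _).symm)
        exact h2 h1
  have h := key k
  have hf : f = C ((c ^ k)⁻¹) * (C (c ^ k) * f) := by
    rw [← mul_assoc, ← map_mul, inv_mul_cancel₀ (pow_ne_zero _ hg), map_one, one_mul]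
  rw [hf]
  exact Ideal.mul_mem_left _ _ h

lemma mem_ext_iff {I : Ideal (PolyR N)} {f : PolyR N} :
    algebraMap (PolyR N) (LocR N) f ∈ extIdeal I ↔ ∃ g ∈ atOrigin N, g * f ∈ I := by
  rw [extIdeal, ← IsLocalization.mk'_one (M := atOrigin N) (LocR N) f,
    IsLocalization.mk'_mem_map_algebraMap_iff (atOrigin N)]

set_option synthInstance.maxHeartbeats 1000000 in
open scoped Classical in
lemma exists_dual_of_not_mem {I : Ideal (PolyR N)} {f : PolyR N} {k : ℕ}
    (hf : f ∉ I ⊔ mIdeal N ^ k) :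
    ∃ q ∈ dualSpace I, dapply q f ≠ 0 := by
  set U : Submodule ℂ (PolyR N) := Submodule.restrictScalars ℂ (I ⊔ mIdeal N ^ k) with hU
  have hfU : (Submodule.Quotient.mk f : PolyR N ⧸ U) ≠ 0 := by
    intro h0
    exact hf ((Submodule.Quotient.mk_eq_zero U).mp h0)
  obtain ⟨ψ, hψ⟩ : ∃ ψ : Module.Dual ℂ (PolyR N ⧸ U),
      ψ (Submodule.Quotient.mk f) ≠ 0 := by
    by_contra h
    push_neg at h
    exact hfU ((Module.forall_dual_apply_eq_zero_iff ℂ _).mp h)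
  set φ : PolyR N →ₗ[ℂ] ℂ := ψ.comp U.mkQ with hφ
  have hφU : ∀ u ∈ U, φ u = 0 := by
    intro u hu
    have : U.mkQ u = 0 := by
      rw [Submodule.mkQ_apply, Submodule.Quotient.mk_eq_zero]
      exact hu
    simp [hφ, this]
  set S : Finset (Fin N →₀ ℕ) :=
    (Finset.Iic (Finsupp.equivFunOnFinite.symm fun _ : Fin N => k)).filter
      (fun α => deg α < k) with hSdef
  have hS : ∀ α : Fin N →₀ ℕ, deg α < k → α ∈ S := by
    intro α hα
    refine Finset.mem_filter.mpr ⟨Finset.mem_Iic.mpr ?_, hα⟩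
    rw [Finsupp.le_def]
    intro i
    have := le_deg α i
    simpa [Finsupp.equivFunOnFinite] using (by omega : α i ≤ k)
  set q : PolyR N := ∑ α ∈ S, monomial α (φ (monomial α 1)) with hq
  have hqc : ∀ β, q.coeff β = if β ∈ S then φ (monomial β 1) else 0 := by
    intro β
    rw [hq, MvPolynomial.coeff_sum]
    simp_rw [MvPolynomial.coeff_monomial]
    exact Finset.sum_ite_eq' S β (fun α => φ (monomial α 1))
  have hrep : ∀ g : PolyR N, dapply q g = φ g := by
    intro g
    set T := g.support.filter (fun α => α ∈ S) with hT
    have h1 : dapply q g = ∑ α ∈ T, φ (monomial α 1) * g.coeff α := by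
      unfold dapply
      rw [← Finset.sum_filter_of_ne (p := fun α => α ∈ S)
        (fun x _ hx => by
          by_contra hxS
          rw [hqc x, if_neg hxS, zero_mul] at hx
          exact hx rfl)]
      refine Finset.sum_congr rfl (fun α hα => ?_)
      rw [hqc α, if_pos (Finset.mem_filter.mp hα).2]
    set πg : PolyR N := ∑ α ∈ T, monomial α (g.coeff α) with hπ
    have h2 : φ πg = ∑ α ∈ T, φ (monomial α 1) * g.coeff α := by
      rw [hπ, map_sum]
      refine Finset.sum_congr rfl (fun α _ => ?_)
      have : (monomial α (g.coeff α) : PolyR N) = g.coeff α • monomial α 1 := by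
        rw [MvPolynomial.smul_monomial, smul_eq_mul, mul_one]
      rw [this, map_smul, smul_eq_mul, mul_comm]
    have hπc : ∀ β, πg.coeff β = if β ∈ T then g.coeff β else 0 := by
      intro β
      rw [hπ, MvPolynomial.coeff_sum]
      simp_rw [MvPolynomial.coeff_monomial]
      exact Finset.sum_ite_eq' T β (fun α => g.coeff α)
    have h3 : g - πg ∈ U := by
      refine Submodule.mem_sup_right (mem_pow_of k _ ?_)
      intro β hβ
      by_contra hlt
      push_neg at hlt
      have hβS : β ∈ S := hS β hlt
      have hcoeff : (g - πg).coeff β = 0 := by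
        rw [MvPolynomial.coeff_sub]
        by_cases hg' : β ∈ g.support
        · rw [hπc β, if_pos (Finset.mem_filter.mpr ⟨hg', hβS⟩), sub_self]
        · rw [hπc β, if_neg (fun hTm => hg' (Finset.mem_filter.mp hTm).1),
            MvPolynomial.notMem_support_iff.mp hg', sub_zero]
      exact MvPolynomial.mem_support_iff.mp hβ hcoeff
    calc dapply q g = φ πg := h1.trans h2.symm
      _ = φ πg + φ (g - πg) := by rw [hφU _ h3, add_zero]
      _ = φ g := by rw [← map_add, add_sub_cancel]
  refine ⟨q, ?_, ?_⟩
  · intro g hg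
    rw [hrep g]
    exact hφU g (Submodule.mem_sup_left hg)
  · rw [hrep f]
    simpa [hφ] using hψ

/-- The prime ideal of polynomials vanishing at the origin. -/
noncomputable def pOrigin (N : ℕ) : Ideal (PolyR N) :=
  RingHom.ker (constantCoeff : PolyR N →+* ℂ)

instance pOrigin_isPrime (N : ℕ) : (pOrigin N).IsPrime :=
  RingHom.ker_isPrime (constantCoeff : PolyR N →+* ℂ)

lemma atOrigin_eq : atOrigin N = (pOrigin N).primeCompl := by
  ext g
  simp [atOrigin, pOrigin, Ideal.primeCompl, RingHom.mem_ker]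

lemma isLocalization_atPrime : IsLocalization.AtPrime (LocR N) (pOrigin N) := by
  unfold IsLocalization.AtPrime
  rw [← atOrigin_eq]
  exact Localization.isLocalization

set_option synthInstance.maxHeartbeats 1000000 in
set_option maxHeartbeats 1000000 in
lemma mem_ext_of_forall {I : Ideal (PolyR N)} {f : PolyR N}
    (h : ∀ k, f ∈ I ⊔ mIdeal N ^ k) :
    algebraMap (PolyR N) (LocR N) f ∈ extIdeal I := by
  haveI := isLocalization_atPrime (N := N)
  haveI : IsLocalRing (LocR N) := IsLocalization.AtPrime.isLocalRing (LocR N) (pOrigin N)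
  haveI : IsNoetherianRing (LocR N) :=
    IsLocalization.isNoetherianRing (atOrigin N) (LocR N) inferInstance
  set J := extIdeal I with hJdef
  by_cases hJ : J = ⊤
  · rw [hJ]; trivial
  set E : Ideal (LocR N) := Ideal.map (algebraMap (PolyR N) (LocR N)) (mIdeal N) with hE
  have hEmax : E ≤ IsLocalRing.maximalIdeal (LocR N) := by
    rw [hE, Ideal.map_le_iff_le_comap, mIdeal, Ideal.span_le]
    rintro _ ⟨i, rfl⟩
    rw [SetLike.mem_coe, Ideal.mem_comap]
    rw [IsLocalization.AtPrime.to_map_mem_maximal_iff (LocR N) (pOrigin N)]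
    simp [pOrigin, RingHom.mem_ker]
  have hJE : J ⊔ E ≠ ⊤ := by
    intro htop
    have h1 : J ⊔ E ≤ IsLocalRing.maximalIdeal (LocR N) :=
      sup_le (IsLocalRing.le_maximalIdeal hJ) hEmax
    rw [htop] at h1
    exact (IsLocalRing.maximalIdeal.isMaximal (LocR N)).ne_top (top_le_iff.mp h1)
  set Q := LocR N ⧸ J with hQ
  haveI : Nontrivial Q := Ideal.Quotient.nontrivial_iff.mpr hJ
  haveI : IsLocalRing Q :=
    IsLocalRing.of_surjective' (Ideal.Quotient.mk J) Ideal.Quotient.mk_surjective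
  set π := Ideal.Quotient.mk J with hπ
  set n : Ideal Q := Ideal.map π E with hn
  have hnTop : n ≠ ⊤ := by
    intro htop
    apply hJE
    have hcomap : Ideal.comap π n = E ⊔ J := by
      rw [hn, Ideal.comap_map_of_surjective π Ideal.Quotient.mk_surjective,
        ← RingHom.ker_eq_comap_bot, Ideal.mk_ker]
    rw [htop, Ideal.comap_top] at hcomap
    rw [sup_comm]
    exact hcomap.symm
  have hmem : ∀ k, π (algebraMap (PolyR N) (LocR N) f) ∈ n ^ k := by
    intro k
    have h1 : algebraMap (PolyR N) (LocR N) f ∈ J ⊔ E ^ k := by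
      have h2 := Ideal.mem_map_of_mem (algebraMap (PolyR N) (LocR N)) (h k)
      rwa [Ideal.map_sup, Ideal.map_pow] at h2
    have h3 := Ideal.mem_map_of_mem π h1
    rw [Ideal.map_sup] at h3
    have := Ideal.map_pow π E k
    erw [this, hπ, Ideal.map_quotient_self, bot_sup_eq] at h3
    exact h3
  have hbot : π (algebraMap (PolyR N) (LocR N) f) ∈ (⊥ : Ideal Q) := by
    haveI hQN : IsNoetherianRing Q := inferInstance
    have hI := @Ideal.iInf_pow_eq_bot_of_isLocalRing Q _ n hQN ‹_› hnTop
    rw [← hI]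
    exact (Submodule.mem_iInf fun i => n ^ i).mpr hmem
  rw [Submodule.mem_bot] at hbot
  have : algebraMap (PolyR N) (LocR N) f ∈ J := by
    rwa [← Ideal.Quotient.eq_zero_iff_mem]
  exact this

lemma mem_dualSpace_iff {I : Ideal (PolyR N)} {q : PolyR N} :
    q ∈ dualSpace I ↔ ∀ f ∈ I, dapply q f = 0 := Iff.rfl

lemma ext_le_of_dual_le {I₁ I₂ : Ideal (PolyR N)}
    (h : dualSpace I₂ ≤ dualSpace I₁) : extIdeal I₁ ≤ extIdeal I₂ := by
  rw [extIdeal, Ideal.map_le_iff_le_comap]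
  intro f hf
  rw [Ideal.mem_comap]
  apply mem_ext_of_forall
  intro k
  by_contra hk
  obtain ⟨q, hq, hqf⟩ := exists_dual_of_not_mem hk
  exact hqf (mem_dualSpace_iff.mp (h hq) f hf)

lemma dual_le_of_ext_le {I₁ I₂ : Ideal (PolyR N)}
    (h : extIdeal I₁ ≤ extIdeal I₂) : dualSpace I₂ ≤ dualSpace I₁ := by
  intro q hq
  rw [mem_dualSpace_iff]
  intro f hf
  have h1 : algebraMap (PolyR N) (LocR N) f ∈ extIdeal I₂ :=
    h (Ideal.mem_map_of_mem _ hf)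
  obtain ⟨g, hg, hgf⟩ := mem_ext_iff.mp h1
  have h2 : f ∈ I₂ ⊔ mIdeal N ^ (q.totalDegree + 1) := mem_sup_pow hg hgf _
  obtain ⟨a, ha, b, hb, rfl⟩ := Submodule.mem_sup.mp h2
  rw [dapply_add_right, mem_dualSpace_iff.mp hq a ha, zero_add, dapply_eq]
  refine Finset.sum_eq_zero (fun α hα => ?_)
  have hdeg : deg α ≤ q.totalDegree := MvPolynomial.le_totalDegree hα
  have hb' : α ∉ b.support := by
    intro hmem
    have := mem_pow_imp hb α hmem
    omega
  rw [MvPolynomial.notMem_support_iff.mp hb', mul_zero]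

end Statement2Aux

/-- `I₁·R_0 ⊆ I₂·R_0` iff `D_0[I₂] ⊆ D_0[I₁]`; consequently the
extension `I·R_0` is uniquely determined by the dual space `D_0[I]`. -/
theorem statement2 {N : ℕ} (hN : 1 ≤ N) (I₁ I₂ : Ideal (PolyR N)) :
    (extIdeal I₁ ≤ extIdeal I₂ ↔ dualSpace I₂ ≤ dualSpace I₁) ∧
    (dualSpace I₁ = dualSpace I₂ → extIdeal I₁ = extIdeal I₂) := by
  constructor
  · exact ⟨Statement2Aux.dual_le_of_ext_le, Statement2Aux.ext_le_of_dual_le⟩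
  · intro h
    exact le_antisymm (Statement2Aux.ext_le_of_dual_le (le_of_eq h.symm))
      (Statement2Aux.ext_le_of_dual_le (le_of_eq h))
end
end

section
/- Let I ⊆ R = ℂ[x_1,…,x_N] be an ideal with I = IR_0 ∩ R (i.e., I is contracted from the local ring of the origin). Then: (a) D_0[I] is spanned by homogeneous functionals (functionals whose support lies in exponents of a single total degree) if and only if I is generated by homogeneous polynomials; (b) D_0[I] is spanned by a set of monomial functionals ∂^α if and only if I is a monomial ideal. -/
open MvPolynomial

noncomputable section

/-! ### Auxiliary lemmas -/

namespace Statement3Aux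

open Finsupp in
lemma degree_eq_sum_univ {N : ℕ} (α : Fin N →₀ ℕ) : α.degree = ∑ i, α i := by
  rw [Finsupp.degree]
  exact Finset.sum_subset (Finset.subset_univ _)
    (fun x _ hx => Finsupp.notMem_support_iff.mp hx)

lemma degree_add {N : ℕ} (α β : Fin N →₀ ℕ) :
    (α + β).degree = α.degree + β.degree := by
  simp [degree_eq_sum_univ, Finset.sum_add_distrib]

lemma degree_single {N : ℕ} (i : Fin N) (n : ℕ) :
    (Finsupp.single i n).degree = n := by
  rw [degree_eq_sum_univ]
  simp [Finsupp.single_apply]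

lemma degree_mono {N : ℕ} {α β : Fin N →₀ ℕ} (h : α ≤ β) :
    α.degree ≤ β.degree := by
  rw [degree_eq_sum_univ, degree_eq_sum_univ]
  exact Finset.sum_le_sum fun i _ => (Finsupp.le_def.mp h) i

/-- Given `k ≤ degree β`, there is `α ≤ β` of degree exactly `k`. -/
lemma exists_le_degree {N : ℕ} (k : ℕ) :
    ∀ β : Fin N →₀ ℕ, k ≤ β.degree → ∃ α ≤ β, α.degree = k := by
  induction k with
  | zero => exact fun β _ => ⟨0, (zero_le : (0 : Fin N →₀ ℕ) ≤ β), map_zero Finsupp.degree⟩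
  | succ k ih =>
    intro β hβ
    obtain ⟨α, hle, hdeg⟩ := ih β (le_trans (Nat.le_succ k) hβ)
    have hne : α ≠ β := fun h => by rw [h] at hdeg; omega
    have : ∃ i, α i < β i := by
      by_contra h
      push_neg at h
      exact hne (le_antisymm hle (Finsupp.le_def.mpr h))
    obtain ⟨i, hi⟩ := this
    refine ⟨α + Finsupp.single i 1, ?_, by rw [degree_add, degree_single, hdeg]⟩
    rw [Finsupp.le_def]
    intro j
    rcases eq_or_ne j i with rfl | hji
    · simpa [Finsupp.single_apply] using hi
    · simpa [Finsupp.single_apply, hji.symm, if_neg] using Finsupp.le_def.mp hle j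

end Statement3Aux
/-! ### dapply lemmas -/

lemma dapply_eq_sum_of_subset {N : ℕ} (q f : PolyR N) {s : Finset (Fin N →₀ ℕ)}
    (hs : f.support ⊆ s) : dapply q f = ∑ α ∈ s, q.coeff α * f.coeff α :=
  Finset.sum_subset hs fun x _ hx => by
    rw [MvPolynomial.notMem_support_iff.mp hx, mul_zero]

lemma dapply_monomial_right {N : ℕ} (q : PolyR N) (α : Fin N →₀ ℕ) (c : ℂ) :
    dapply q (MvPolynomial.monomial α c) = q.coeff α * c := by
  rw [dapply_eq_sum_of_subset q _ (MvPolynomial.support_monomial_subset (s := α) (a := c))]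
  simp [MvPolynomial.coeff_monomial]

lemma dapply_monomial_left {N : ℕ} (α : Fin N →₀ ℕ) (c : ℂ) (f : PolyR N) :
    dapply (MvPolynomial.monomial α c) f = c * f.coeff α := by
  rcases Finset.decidableMem α f.support with h | h
  · rw [MvPolynomial.notMem_support_iff.mp h, mul_zero, dapply]
    refine Finset.sum_eq_zero fun β hβ => ?_
    rw [MvPolynomial.coeff_monomial, if_neg, zero_mul]
    rintro rfl; exact h hβ
  · rw [dapply]
    rw [Finset.sum_eq_single_of_mem α h (fun β _ hβ => by
      rw [MvPolynomial.coeff_monomial, if_neg (fun h' => hβ h'.symm), zero_mul])]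
    rw [MvPolynomial.coeff_monomial, if_pos rfl]

lemma dapply_zero_left {N : ℕ} (f : PolyR N) : dapply 0 f = 0 := by simp [dapply]

lemma dapply_add_left {N : ℕ} (a b f : PolyR N) :
    dapply (a + b) f = dapply a f + dapply b f := by
  simp [dapply, MvPolynomial.coeff_add, add_mul, Finset.sum_add_distrib]

lemma dapply_smul_left {N : ℕ} (c : ℂ) (a f : PolyR N) :
    dapply (c • a) f = c * dapply a f := by
  simp [dapply, MvPolynomial.coeff_smul, Finset.mul_sum, mul_assoc]

/-- `dapply · f` as a linear map. -/
def dapplyL {N : ℕ} (f : PolyR N) : PolyR N →ₗ[ℂ] ℂ where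
  toFun q := dapply q f
  map_add' a b := dapply_add_left a b f
  map_smul' c a := dapply_smul_left c a f

lemma dapply_eq_zero_of_span {N : ℕ} {B : Set (PolyR N)} {f : PolyR N}
    (h : ∀ b ∈ B, dapply b f = 0) {q : PolyR N}
    (hq : q ∈ Submodule.span ℂ B) : dapply q f = 0 := by
  have : Submodule.span ℂ B ≤ LinearMap.ker (dapplyL f) := by
    rw [Submodule.span_le]; exact fun b hb => h b hb
  exact this hq

lemma mem_dualSpace {N : ℕ} {I : Ideal (PolyR N)} {q : PolyR N} :
    q ∈ dualSpace I ↔ ∀ f ∈ I, dapply q f = 0 := Iff.rfl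
/-! ### The maximal ideal and its powers -/

open Statement3Aux

lemma mem_mIdeal_iff {N : ℕ} {f : PolyR N} :
    f ∈ mIdeal N ↔ MvPolynomial.constantCoeff f = 0 := by
  rw [mIdeal, ← Set.image_univ, MvPolynomial.mem_ideal_span_X_image]
  constructor
  · intro h
    rw [MvPolynomial.constantCoeff_eq, ← MvPolynomial.notMem_support_iff]
    intro h0
    obtain ⟨i, _, hi⟩ := h 0 h0
    exact hi rfl
  · intro h m hm
    have hm0 : m ≠ 0 := by
      rintro rfl
      rw [MvPolynomial.mem_support_iff] at hm
      exact hm h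
    obtain ⟨i, hi⟩ := Finsupp.ne_iff.mp hm0
    exact ⟨i, Set.mem_univ i, hi⟩

lemma monomial_mem_mpow {N : ℕ} {α : Fin N →₀ ℕ} {k : ℕ} (h : k ≤ α.degree) :
    (MvPolynomial.monomial α (1 : ℂ)) ∈ mIdeal N ^ k := by
  have h1 : (MvPolynomial.monomial α (1 : ℂ)) = ∏ i ∈ α.support, MvPolynomial.X i ^ α i := by
    rw [MvPolynomial.monomial_eq, MvPolynomial.C_1, one_mul]
    rfl
  have h2 : (∏ i ∈ α.support, MvPolynomial.X (R := ℂ) i ^ α i) ∈ mIdeal N ^ α.degree := by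
    rw [show α.degree = ∑ i ∈ α.support, α i from rfl, ← Finset.prod_pow_eq_pow_sum]
    refine Ideal.prod_mem_prod fun i _ => Ideal.pow_mem_pow ?_ _
    rw [mem_mIdeal_iff]; simp
  rw [h1]
  exact Ideal.pow_le_pow_right h h2

lemma mpow_eq_span {N : ℕ} (k : ℕ) :
    mIdeal N ^ k =
      Ideal.span ((fun α => MvPolynomial.monomial α (1 : ℂ)) ''
        {α : Fin N →₀ ℕ | α.degree = k}) := by
  apply le_antisymm
  · induction k with
    | zero =>
      rw [pow_zero, Ideal.one_eq_top]
      have h1 : (1 : PolyR N) ∈ Ideal.span ((fun α => MvPolynomial.monomial α (1 : ℂ)) ''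
          {α : Fin N →₀ ℕ | α.degree = 0}) :=
        Ideal.subset_span ⟨0, by simp [map_zero],
          by simp⟩
      intro x _
      simpa using Ideal.mul_mem_left _ x h1
    | succ k ih =>
      rw [pow_succ]
      refine Ideal.mul_le.mpr fun r hr s hs => ?_
      rw [MvPolynomial.mem_ideal_span_monomial_image]
      intro β hβ
      classical
      have hβ' := MvPolynomial.support_mul r s hβ
      rw [Finset.mem_add] at hβ'
      obtain ⟨β₁, hβ₁, β₂, hβ₂, rfl⟩ := hβ'
      have hr' := ih hr
      rw [MvPolynomial.mem_ideal_span_monomial_image] at hr'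
      obtain ⟨α₁, hα₁, hα₁le⟩ := hr' β₁ hβ₁
      have hs2 : ¬ β₂ = 0 := by
        rw [mem_mIdeal_iff, MvPolynomial.constantCoeff_eq, ← MvPolynomial.notMem_support_iff]
          at hs
        rintro rfl; exact hs hβ₂
      obtain ⟨i, hi⟩ := Finsupp.ne_iff.mp hs2
      refine ⟨α₁ + Finsupp.single i 1, by
        simp only [Set.mem_setOf_eq] at hα₁ ⊢
        rw [degree_add, degree_single, hα₁], ?_⟩
      rw [Finsupp.le_def]
      intro j
      have h1 := Finsupp.le_def.mp hα₁le j
      have hs' : Finsupp.single i 1 j ≤ β₂ j := by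
        rw [Finsupp.single_apply]
        split_ifs with h
        · rcases h; exact Nat.one_le_iff_ne_zero.mpr (by simpa using hi)
        · exact Nat.zero_le _
      simp only [Finsupp.add_apply]
      exact Nat.add_le_add h1 hs'
  · rw [Ideal.span_le]
    rintro x ⟨α, hα, rfl⟩
    exact monomial_mem_mpow (le_of_eq hα.symm)

lemma mem_mpow_iff {N : ℕ} {f : PolyR N} {k : ℕ} :
    f ∈ mIdeal N ^ k ↔ ∀ β ∈ f.support, k ≤ β.degree := by
  rw [mpow_eq_span, MvPolynomial.mem_ideal_span_monomial_image]
  constructor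
  · intro h β hβ
    obtain ⟨α, hα, hle⟩ := h β hβ
    exact hα ▸ degree_mono hle
  · intro h β hβ
    obtain ⟨α, hle, hdeg⟩ := exists_le_degree k β (h β hβ)
    exact ⟨α, hdeg, hle⟩
/-! ### Contraction and Krull intersection -/

lemma mIdeal_isPrime {N : ℕ} : (mIdeal N).IsPrime := by
  have : mIdeal N = RingHom.ker (MvPolynomial.constantCoeff (σ := Fin N) (R := ℂ)) := by
    ext f; rw [mem_mIdeal_iff, RingHom.mem_ker]
  rw [this]
  exact RingHom.ker_isPrime _

lemma atOrigin_eq {N : ℕ} [h : (mIdeal N).IsPrime] :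
    atOrigin N = (mIdeal N).primeCompl := by
  ext g
  show MvPolynomial.constantCoeff g ≠ 0 ↔ g ∉ mIdeal N
  exact (not_iff_not.mpr mem_mIdeal_iff).symm

set_option synthInstance.maxHeartbeats 1000000 in
set_option maxHeartbeats 1600000 in
lemma mem_of_forall_mem_add_mpow {N : ℕ} {I : Ideal (PolyR N)} (hI : contExt I = I)
    {f : PolyR N} (h : ∀ k, f ∈ I + mIdeal N ^ k) : f ∈ I := by
  classical
  haveI hP : (mIdeal N).IsPrime := mIdeal_isPrime
  haveI hloc : IsLocalization.AtPrime (LocR N) (mIdeal N) := by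
    rw [IsLocalization.AtPrime, ← atOrigin_eq]
    exact Localization.isLocalization
  haveI : IsLocalRing (LocR N) := IsLocalization.AtPrime.isLocalRing (LocR N) (mIdeal N)
  haveI : IsNoetherianRing (LocR N) :=
    IsLocalization.isNoetherianRing (atOrigin N) (LocR N) inferInstance
  set φ := algebraMap (PolyR N) (LocR N) with hφ
  by_cases htop : extIdeal I = ⊤
  · rw [← hI, contExt, htop]
    exact Submodule.mem_top
  -- the image of the maximal ideal
  have hMle : Ideal.map φ (mIdeal N) ≤ IsLocalRing.maximalIdeal (LocR N) := by
    rw [mIdeal, Ideal.map_span, Ideal.span_le]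
    rintro x ⟨y, ⟨i, rfl⟩, rfl⟩
    exact (IsLocalization.AtPrime.to_map_mem_maximal_iff (LocR N) (mIdeal N) _).mpr
      (mem_mIdeal_iff.mpr (by simp))
  -- pass to the quotient by the extended ideal
  haveI : Nontrivial (LocR N ⧸ extIdeal I) := Ideal.Quotient.nontrivial_iff.mpr htop
  haveI : IsLocalRing (LocR N ⧸ extIdeal I) :=
    IsLocalRing.of_surjective' _ (Ideal.Quotient.mk_surjective (I := extIdeal I))
  haveI : IsNoetherianRing (LocR N ⧸ extIdeal I) := inferInstance
  set π := Ideal.Quotient.mk (extIdeal I) with hπ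
  set Mbar := Ideal.map π (Ideal.map φ (mIdeal N)) with hMbar
  have hMbar_ne : Mbar ≠ ⊤ := by
    intro hM
    have h1 : π 1 ∈ Mbar := by rw [hM]; exact Submodule.mem_top
    rw [hMbar, Ideal.mem_quotient_iff_mem_sup] at h1
    have hsup : Ideal.map φ (mIdeal N) ⊔ extIdeal I ≤ IsLocalRing.maximalIdeal (LocR N) :=
      sup_le hMle (IsLocalRing.le_maximalIdeal htop)
    exact (IsLocalRing.maximalIdeal.isMaximal (LocR N)).ne_top
      (Ideal.eq_top_iff_one _ |>.mpr (hsup h1))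
  have hKrull : (⨅ k : ℕ, Mbar ^ k) = ⊥ :=
    Ideal.iInf_pow_eq_bot_of_isLocalRing (R := LocR N ⧸ extIdeal I) Mbar hMbar_ne
  have hmem : ∀ k, π (φ f) ∈ Mbar ^ k := by
    intro k
    have h1 : φ f ∈ Ideal.map φ (I + mIdeal N ^ k) := Ideal.mem_map_of_mem φ (h k)
    rw [Ideal.add_eq_sup, Ideal.map_sup, Ideal.map_pow] at h1
    have h2 : π (φ f) ∈ Ideal.map π (Ideal.map φ I ⊔ Ideal.map φ (mIdeal N) ^ k) :=
      Ideal.mem_map_of_mem π h1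
    rw [Ideal.map_sup, Ideal.map_pow (S := LocR N ⧸ extIdeal I)] at h2
    have h3 : Ideal.map π (Ideal.map φ I) = ⊥ := by
      rw [hπ, ← extIdeal]
      exact Ideal.map_quotient_self _
    rw [h3, bot_sup_eq] at h2
    exact h2
  have : π (φ f) ∈ (⨅ k : ℕ, Mbar ^ k) := Submodule.mem_iInf _ |>.mpr hmem
  rw [hKrull, Submodule.mem_bot] at this
  have : φ f ∈ extIdeal I := by
    rwa [← Ideal.Quotient.eq_zero_iff_mem]
  rw [← hI]
  exact this
/-! ### Separation by dual functionals -/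

set_option synthInstance.maxHeartbeats 1000000 in
set_option maxHeartbeats 1600000 in
lemma exists_dual_of_not_mem {N : ℕ} {I : Ideal (PolyR N)} {k : ℕ} {f : PolyR N}
    (hf : f ∉ I + mIdeal N ^ k) :
    ∃ q ∈ dualSpace I, dapply q f ≠ 0 := by
  classical
  set J : Submodule ℂ (PolyR N) := Submodule.restrictScalars ℂ (I + mIdeal N ^ k) with hJ
  have hfJ : f ∉ J := hf
  -- a linear functional vanishing on J but not on f
  have hne : Submodule.Quotient.mk (p := J) f ≠ 0 := by
    rw [Ne, Submodule.Quotient.mk_eq_zero]; exact hfJ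
  obtain ⟨φ₀, hφ₀⟩ : ∃ φ₀ : Module.Dual ℂ (PolyR N ⧸ J),
      φ₀ (Submodule.Quotient.mk f) ≠ 0 := by
    by_contra hcon
    push_neg at hcon
    exact hne ((Module.forall_dual_apply_eq_zero_iff ℂ _).mp hcon)
  set Φ : PolyR N →ₗ[ℂ] ℂ := φ₀ ∘ₗ J.mkQ with hΦ
  have hΦJ : ∀ g ∈ J, Φ g = 0 := by
    intro g hg
    simp only [hΦ, LinearMap.comp_apply, Submodule.mkQ_apply]
    rw [(Submodule.Quotient.mk_eq_zero J).mpr hg, map_zero]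
  -- the candidate dual functional
  set T : Finset (Fin N →₀ ℕ) :=
    (Finsupp.finite_of_degree_le (σ := Fin N) k).toFinset.filter
      (fun α => α.degree < k) with hT
  have hTmem : ∀ γ : Fin N →₀ ℕ, γ ∈ T ↔ γ.degree < k := by
    intro γ
    rw [hT, Finset.mem_filter, Set.Finite.mem_toFinset, Set.mem_setOf_eq]
    exact ⟨fun h => h.2, fun h => ⟨le_of_lt h, h⟩⟩
  set q : PolyR N := ∑ α ∈ T, MvPolynomial.monomial α (Φ (MvPolynomial.monomial α 1)) with hq
  have hcoeff : ∀ γ, q.coeff γ =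
      if γ.degree < k then Φ (MvPolynomial.monomial γ 1) else 0 := by
    intro γ
    rw [hq, MvPolynomial.coeff_sum]
    simp_rw [MvPolynomial.coeff_monomial]
    rw [Finset.sum_ite_eq' T γ (fun α => Φ (MvPolynomial.monomial α 1))]
    by_cases h : γ.degree < k
    · rw [if_pos ((hTmem γ).mpr h), if_pos h]
    · rw [if_neg (fun hm => h ((hTmem γ).mp hm)), if_neg h]
  -- the truncation below degree k
  have key : ∀ g : PolyR N, dapply q g =
      Φ (∑ β ∈ g.support.filter (fun β => β.degree < k), MvPolynomial.monomial β (g.coeff β)) := by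
    intro g
    rw [dapply, map_sum]
    rw [Finset.sum_filter]
    refine Finset.sum_congr rfl fun β _ => ?_
    rw [hcoeff β]
    split_ifs with h
    · rw [mul_comm, ← smul_eq_mul, ← map_smul, MvPolynomial.smul_monomial, smul_eq_mul, mul_one]
    · rw [zero_mul]
  have hlow : ∀ g : PolyR N,
      g - (∑ β ∈ g.support.filter (fun β => β.degree < k), MvPolynomial.monomial β (g.coeff β))
        ∈ mIdeal N ^ k := by
    intro g
    set low := ∑ β ∈ g.support.filter (fun β => β.degree < k),
      MvPolynomial.monomial β (g.coeff β) with hlowdef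
    have hlowcoeff : ∀ β, low.coeff β =
        if β ∈ g.support.filter (fun β => β.degree < k) then g.coeff β else 0 := by
      intro β
      rw [hlowdef, MvPolynomial.coeff_sum]
      simp_rw [MvPolynomial.coeff_monomial]
      exact Finset.sum_ite_eq' _ β _
    rw [mem_mpow_iff]
    intro β hβ
    by_contra hcon
    push_neg at hcon
    have : (g - low).coeff β = 0 := by
      rw [MvPolynomial.coeff_sub, hlowcoeff β]
      by_cases hg : β ∈ g.support
      · rw [if_pos (Finset.mem_filter.mpr ⟨hg, hcon⟩), sub_self]
      · rw [if_neg (fun hmem => hg (Finset.mem_filter.mp hmem).1),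
          MvPolynomial.notMem_support_iff.mp hg, sub_zero]
    exact (MvPolynomial.mem_support_iff.mp hβ) this
  refine ⟨q, ?_, ?_⟩
  · intro g hg
    rw [key g]
    apply hΦJ
    have h1 : g ∈ J := Submodule.mem_sup_left hg
    have h2 : g - _ ∈ J := Submodule.mem_sup_right (hlow g)
    have := Submodule.sub_mem J h1 h2
    simpa using this
  · rw [key f]
    have h2 : Φ (f - _) = 0 := hΦJ _ (Submodule.mem_sup_right (hlow f))
    rw [map_sub] at h2
    have : Φ (∑ β ∈ f.support.filter (fun β => β.degree < k),
        MvPolynomial.monomial β (f.coeff β)) = Φ f := by linear_combination -h2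
    rw [this]
    exact hφ₀
  
lemma mem_iff_dual {N : ℕ} {I : Ideal (PolyR N)} (hI : contExt I = I) (f : PolyR N) :
    f ∈ I ↔ ∀ q ∈ dualSpace I, dapply q f = 0 := by
  constructor
  · exact fun hf q hq => hq f hf
  · intro h
    by_contra hf
    have : ¬ ∀ k, f ∈ I + mIdeal N ^ k := fun hk => hf (mem_of_forall_mem_add_mpow hI hk)
    push_neg at this
    obtain ⟨k, hk⟩ := this
    obtain ⟨q, hq, hne⟩ := exists_dual_of_not_mem hk
    exact hne (h q hq)
/-! ### Homogeneous and monomial component lemmas -/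

lemma dapply_homogeneousComponent_swap {N : ℕ} (k : ℕ) (q g : PolyR N) :
    dapply (MvPolynomial.homogeneousComponent k q) g
      = dapply q (MvPolynomial.homogeneousComponent k g) := by
  have hsub : (MvPolynomial.homogeneousComponent k g).support ⊆ g.support := by
    intro β hβ
    rw [MvPolynomial.mem_support_iff] at hβ ⊢
    intro h
    apply hβ
    rw [MvPolynomial.coeff_homogeneousComponent]
    split_ifs
    · exact h
    · rfl
  rw [dapply, dapply_eq_sum_of_subset q _ hsub]
  refine Finset.sum_congr rfl fun β _ => ?_
  rw [MvPolynomial.coeff_homogeneousComponent, MvPolynomial.coeff_homogeneousComponent]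
  split_ifs with h
  · rfl
  · rw [zero_mul, mul_zero]

lemma homogeneousComponent_mem_of_span {N : ℕ} {G : Set (PolyR N)}
    (hG : ∀ g ∈ G, ∃ k, MvPolynomial.IsHomogeneous g k) {f : PolyR N}
    (hf : f ∈ Ideal.span G) (d : ℕ) :
    MvPolynomial.homogeneousComponent d f ∈ Ideal.span G := by
  classical
  letI : GradedAlgebra (MvPolynomial.homogeneousSubmodule (Fin N) ℂ) :=
    MvPolynomial.gradedAlgebra
  have hhom : Ideal.IsHomogeneous (MvPolynomial.homogeneousSubmodule (Fin N) ℂ)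
      (Ideal.span G) :=
    Ideal.homogeneous_span _ _ (fun x hx => (hG x hx).imp fun k hk =>
      (MvPolynomial.mem_homogeneousSubmodule k x).mpr hk)
  have h1 := hhom d hf
  have h2 : (DirectSum.decompose (MvPolynomial.homogeneousSubmodule (Fin N) ℂ) f d
      : PolyR N) = MvPolynomial.homogeneousComponent d f :=
    MvPolynomial.decomposition.decompose'_apply f d
  rwa [h2] at h1

lemma monomial_coeff_mem {N : ℕ} {G : Set (PolyR N)}
    (hG : ∀ g ∈ G, ∃ α, g = MvPolynomial.monomial α (1 : ℂ)) {f : PolyR N}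
    (hf : f ∈ Ideal.span G) (α : Fin N →₀ ℕ) :
    MvPolynomial.monomial α (f.coeff α) ∈ Ideal.span G := by
  classical
  refine Submodule.span_induction ?_ ?_ ?_ ?_ hf (p := fun x _ =>
    ∀ β, MvPolynomial.monomial β (x.coeff β) ∈ Ideal.span G) α
  · intro g hg β
    obtain ⟨γ, rfl⟩ := hG g hg
    rw [MvPolynomial.coeff_monomial]
    split_ifs with h
    · exact h ▸ Ideal.subset_span hg
    · rw [MvPolynomial.monomial_zero]; exact Ideal.zero_mem _
  · intro β; simp only [MvPolynomial.coeff_zero, MvPolynomial.monomial_zero]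
    exact Ideal.zero_mem _
  · intro x y hx hy hx' hy' β
    rw [MvPolynomial.coeff_add, map_add]
    exact Ideal.add_mem _ (hx' β) (hy' β)
  · intro a x hx hx' β
    rw [smul_eq_mul, MvPolynomial.coeff_mul]
    rw [map_sum]
    apply Ideal.sum_mem
    rintro ⟨γ₁, γ₂⟩ hγ
    rw [Finset.HasAntidiagonal.mem_antidiagonal] at hγ
    have : (MvPolynomial.monomial β) (a.coeff γ₁ * x.coeff γ₂)
        = MvPolynomial.monomial γ₁ (a.coeff γ₁) * MvPolynomial.monomial γ₂ (x.coeff γ₂) := by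
      rw [MvPolynomial.monomial_mul, hγ]
    rw [this]
    exact Ideal.mul_mem_left _ _ (hx' γ₂)
/-- Let `I` be contracted from the local ring of the origin.  Then
(a) `D_0[I]` is spanned by homogeneous functionals iff `I` is generated by
homogeneous polynomials, and (b) `D_0[I]` is spanned by a set of monomial
functionals `∂^α` iff `I` is a monomial ideal. -/
theorem statement3 {N : ℕ} (hN : 1 ≤ N) (I : Ideal (PolyR N))
    (hI : contExt I = I) :
    ((∃ B : Set (PolyR N), B ⊆ (dualSpace I : Set (PolyR N)) ∧
        (∀ q ∈ B, ∃ k, MvPolynomial.IsHomogeneous q k) ∧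
        Submodule.span ℂ B = dualSpace I) ↔
      (∃ G : Set (PolyR N), (∀ g ∈ G, ∃ k, MvPolynomial.IsHomogeneous g k) ∧
        Ideal.span G = I)) ∧
    ((∃ A : Set (Fin N →₀ ℕ),
        Submodule.span ℂ ((fun α => (MvPolynomial.monomial α (1 : ℂ))) '' A)
          = dualSpace I) ↔
      (∃ G : Set (PolyR N), (∀ g ∈ G, ∃ α, g = MvPolynomial.monomial α (1 : ℂ)) ∧
        Ideal.span G = I)) := by
  constructor
  · -- (a) homogeneous case
    constructor
    · rintro ⟨B, hBsub, hBhom, hBspan⟩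
      refine ⟨{g | g ∈ I ∧ ∃ k, MvPolynomial.IsHomogeneous g k},
        fun g hg => hg.2, ?_⟩
      apply le_antisymm
      · rw [Ideal.span_le]; exact fun g hg => hg.1
      · intro f hf
        rw [← MvPolynomial.sum_homogeneousComponent f]
        apply Ideal.sum_mem
        intro d _
        have hdI : MvPolynomial.homogeneousComponent d f ∈ I := by
          rw [mem_iff_dual hI]
          intro p hp
          rw [← hBspan] at hp
          refine dapply_eq_zero_of_span (fun b hb => ?_) hp
          obtain ⟨kb, hkb⟩ := hBhom b hb
          rw [← dapply_homogeneousComponent_swap]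
          rw [MvPolynomial.homogeneousComponent_of_mem
            ((MvPolynomial.mem_homogeneousSubmodule kb b).mpr hkb)]
          split_ifs with hd
          · exact hBsub hb f hf
          · exact dapply_zero_left f
        exact Ideal.subset_span
          ⟨hdI, d, MvPolynomial.homogeneousComponent_isHomogeneous d f⟩
    · rintro ⟨G, hGhom, hGspan⟩
      refine ⟨{q | q ∈ dualSpace I ∧ ∃ k, MvPolynomial.IsHomogeneous q k},
        fun q hq => hq.1, fun q hq => hq.2, ?_⟩
      apply le_antisymm
      · rw [Submodule.span_le]; exact fun q hq => hq.1
      · intro p hp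
        rw [← MvPolynomial.sum_homogeneousComponent p]
        apply Submodule.sum_mem
        intro d _
        refine Submodule.subset_span
          ⟨?_, d, MvPolynomial.homogeneousComponent_isHomogeneous d p⟩
        intro f hf
        rw [dapply_homogeneousComponent_swap]
        have hcf : MvPolynomial.homogeneousComponent d f ∈ I := by
          rw [← hGspan] at hf ⊢
          exact homogeneousComponent_mem_of_span hGhom hf d
        exact hp (MvPolynomial.homogeneousComponent d f) hcf
  · -- (b) monomial case
    constructor
    · rintro ⟨A, hA⟩
      refine ⟨{g | g ∈ I ∧ ∃ α, g = MvPolynomial.monomial α (1 : ℂ)},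
        fun g hg => hg.2, ?_⟩
      apply le_antisymm
      · rw [Ideal.span_le]; exact fun g hg => hg.1
      · intro f hf
        rw [← MvPolynomial.support_sum_monomial_coeff f]
        apply Ideal.sum_mem
        intro β hβ
        have hmono : (MvPolynomial.monomial β (1 : ℂ)) ∈ I := by
          rw [mem_iff_dual hI]
          intro p hp
          rw [← hA] at hp
          refine dapply_eq_zero_of_span ?_ hp
          rintro b ⟨α, hαA, rfl⟩
          rw [dapply_monomial_left, one_mul, MvPolynomial.coeff_monomial]
          rw [if_neg]
          rintro rfl
          have hbd : (MvPolynomial.monomial β (1 : ℂ)) ∈ dualSpace I := by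
            rw [← hA]
            exact Submodule.subset_span ⟨β, hαA, rfl⟩
          have hzero := hbd f hf
          rw [dapply_monomial_left, one_mul] at hzero
          exact MvPolynomial.mem_support_iff.mp hβ hzero
        have heq : MvPolynomial.monomial β (f.coeff β)
            = MvPolynomial.C (f.coeff β) * MvPolynomial.monomial β 1 := by
          rw [MvPolynomial.C_mul_monomial, mul_one]
        rw [heq]
        exact Ideal.mul_mem_left _ _ (Ideal.subset_span ⟨hmono, β, rfl⟩)
    · rintro ⟨G, hGmono, hGspan⟩
      refine ⟨{α | (MvPolynomial.monomial α (1 : ℂ)) ∈ dualSpace I}, ?_⟩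
      apply le_antisymm
      · rw [Submodule.span_le]
        rintro b ⟨α, hα, rfl⟩
        exact hα
      · intro q hq
        rw [← MvPolynomial.support_sum_monomial_coeff q]
        apply Submodule.sum_mem
        intro α hα
        have h1 : (MvPolynomial.monomial α (1 : ℂ)) ∈ dualSpace I := by
          intro f hf
          rw [dapply_monomial_left, one_mul]
          have hm : MvPolynomial.monomial α (f.coeff α) ∈ I := by
            rw [← hGspan] at hf ⊢
            exact monomial_coeff_mem hGmono hf α
          have hz := hq _ hm
          rw [dapply_monomial_right] at hz
          exact (mul_eq_zero.mp hz).resolve_left (MvPolynomial.mem_support_iff.mp hα)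
        have heq : MvPolynomial.monomial α (q.coeff α)
            = q.coeff α • MvPolynomial.monomial α (1 : ℂ) := by
          rw [MvPolynomial.smul_monomial, smul_eq_mul, mul_one]
        rw [heq]
        exact Submodule.smul_mem _ _ (Submodule.subset_span ⟨α, h1, rfl⟩)
end
end

section
/- Let I ⊆ R = ℂ[x_1,…,x_N] be an ideal generated by homogeneous polynomials and let f ∈ R be a polynomial of degree at most d. Then f ∈ I if and only if q(f) = 0 for every q in the truncated dual space D_0^d[I]. -/
open MvPolynomial

noncomputable section

private lemma sum_univ_eq_degree {N : ℕ} (α : Fin N →₀ ℕ) : ∑ i, α i = α.degree :=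
  (Finset.sum_subset (Finset.subset_univ _)
    (fun i _ hi => Finsupp.notMem_support_iff.mp hi)).symm

private lemma sum_univ_le_totalDegree {N : ℕ} {f : PolyR N} {β : Fin N →₀ ℕ}
    (h : β ∈ f.support) : ∑ i, β i ≤ f.totalDegree := by
  rw [sum_univ_eq_degree]
  exact MvPolynomial.le_totalDegree h

attribute [local instance] MvPolynomial.gradedAlgebra

private lemma homogComp_mem {N : ℕ} (I : Ideal (PolyR N))
    (hI : ∃ G : Set (PolyR N), (∀ g ∈ G, ∃ k, MvPolynomial.IsHomogeneous g k) ∧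
      Ideal.span G = I)
    {g : PolyR N} (hg : g ∈ I) (k : ℕ) : homogeneousComponent k g ∈ I := by
  obtain ⟨G, hG, rfl⟩ := hI
  have h : (Ideal.span G).IsHomogeneous (homogeneousSubmodule (Fin N) ℂ) := by
    apply Ideal.homogeneous_span
    intro x hx
    obtain ⟨k, hk⟩ := hG x hx
    exact ⟨k, (mem_homogeneousSubmodule _ _).mpr hk⟩
  have h2 := h k hg
  have h3 : ((DirectSum.decompose (homogeneousSubmodule (Fin N) ℂ) g k :
      homogeneousSubmodule (Fin N) ℂ k) : PolyR N) = homogeneousComponent k g :=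
    MvPolynomial.decomposition.decompose'_apply g k
  rwa [h3] at h2

/-- If `I` is generated by homogeneous polynomials and
`deg f ≤ d`, then `f ∈ I` iff `q(f) = 0` for every `q ∈ D_0^d[I]`. -/
theorem statement4 {N : ℕ} (hN : 1 ≤ N) (I : Ideal (PolyR N))
    (hI : ∃ G : Set (PolyR N), (∀ g ∈ G, ∃ k, MvPolynomial.IsHomogeneous g k) ∧
      Ideal.span G = I)
    (d : ℕ) (f : PolyR N) (hf : f.totalDegree ≤ d) :
    f ∈ I ↔ ∀ q ∈ truncDual I d, dapply q f = 0 := by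
  classical
  constructor
  · intro hfI q hq
    exact (Submodule.mem_inf.mp hq).1 f hfI
  intro hq
  by_contra hfI
  set J : Submodule ℂ (PolyR N) :=
    (Submodule.restrictScalars ℂ I) ⊓ expSupported (fun α => ∑ i, α i ≤ d) with hJ
  set W : Submodule ℂ (PolyR N) :=
    J ⊔ expSupported (fun α : Fin N →₀ ℕ => d < ∑ i, α i) with hW
  -- the truncation operator
  set T : PolyR N → PolyR N := fun g =>
    ∑ α ∈ g.support.filter (fun α => ∑ i, α i ≤ d),
      (MvPolynomial.monomial α) (g.coeff α) with hT
  have trunc_coeff : ∀ (g : PolyR N) (β : Fin N →₀ ℕ),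
      (T g).coeff β = if ∑ i, β i ≤ d then g.coeff β else 0 := by
    intro g β
    rw [hT]
    simp only [MvPolynomial.coeff_sum, MvPolynomial.coeff_monomial]
    rw [Finset.sum_ite_eq' _ β (fun α => g.coeff α)]
    by_cases hβd : ∑ i, β i ≤ d <;> by_cases h0 : MvPolynomial.coeff β g = 0 <;>
      simp [Finset.mem_filter, MvPolynomial.mem_support_iff, hβd, h0]
  have trunc_memJ : ∀ g ∈ I, T g ∈ J := by
    intro g hg
    refine Submodule.mem_inf.mpr ⟨?_, ?_⟩
    · -- T g ∈ I
      have heq : T g = ∑ k ∈ Finset.range (d + 1), homogeneousComponent k g := by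
        apply MvPolynomial.ext
        intro β
        rw [trunc_coeff g β, MvPolynomial.coeff_sum]
        simp only [coeff_homogeneousComponent]
        rw [Finset.sum_ite_eq _ β.degree (fun _ => g.coeff β)]
        by_cases hβd : ∑ i, β i ≤ d
        · rw [if_pos hβd, if_pos (Finset.mem_range.mpr
            (by rw [← sum_univ_eq_degree]; omega))]
        · rw [if_neg hβd, if_neg (fun h => hβd (by
            rw [sum_univ_eq_degree]
            exact Nat.lt_succ_iff.mp (Finset.mem_range.mp h)))]
      rw [heq]
      exact Submodule.sum_mem _ (fun k _ => homogComp_mem I hI hg k)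
    · -- exponent support
      intro β hβ
      by_contra hc
      have : (T g).coeff β = 0 := by rw [trunc_coeff, if_neg hc]
      exact (MvPolynomial.mem_support_iff.mp hβ) this
  have hfW : f ∉ W := by
    intro hmem
    rw [hW, Submodule.mem_sup] at hmem
    obtain ⟨j, hj, h, hh, hjh⟩ := hmem
    have hh0 : h = 0 := by
      apply MvPolynomial.ext
      intro β
      rw [MvPolynomial.coeff_zero]
      by_contra hc
      have hβd : d < ∑ i, β i := hh β (MvPolynomial.mem_support_iff.mpr hc)
      have hfβ : f.coeff β = 0 := by
        by_contra hc2
        exact absurd (le_trans (sum_univ_le_totalDegree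
          (MvPolynomial.mem_support_iff.mpr hc2)) hf) (not_le.mpr hβd)
      have hjβ : j.coeff β = 0 := by
        by_contra hc2
        exact absurd ((Submodule.mem_inf.mp hj).2 β (MvPolynomial.mem_support_iff.mpr hc2))
          (not_le.mpr hβd)
      have : h = f - j := by rw [← hjh]; ring
      rw [this] at hc
      rw [MvPolynomial.coeff_sub, hfβ, hjβ, sub_zero] at hc
      exact hc rfl
    rw [hh0, add_zero] at hjh
    rw [← hjh] at hfI
    exact hfI (Submodule.mem_inf.mp hj).1
  rw [← Subspace.dualAnnihilator_dualCoannihilator_eq (W := W),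
    Submodule.mem_dualCoannihilator] at hfW
  push_neg at hfW
  obtain ⟨φ, hφW, hφf⟩ := hfW
  have hφW' : ∀ w ∈ W, φ w = 0 := (Submodule.mem_dualAnnihilator φ).mp hφW
  -- construct q
  set c : Fin N →₀ ℕ := Finsupp.equivFunOnFinite.symm (fun _ => d) with hc
  set S : Finset (Fin N →₀ ℕ) := (Finset.Iic c).filter (fun α => ∑ i, α i ≤ d) with hS
  set q : PolyR N := ∑ α ∈ S, (MvPolynomial.monomial α) (φ ((MvPolynomial.monomial α) 1))
    with hqdef
  have hmemS : ∀ α : Fin N →₀ ℕ, (∑ i, α i ≤ d) → α ∈ S := by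
    intro α hα
    rw [hS, Finset.mem_filter, Finset.mem_Iic]
    refine ⟨Finsupp.le_def.mpr fun i => ?_, hα⟩
    have h1 : α i ≤ ∑ j, α j :=
      Finset.single_le_sum (f := fun j => α j) (fun j _ => Nat.zero_le _) (Finset.mem_univ i)
    have h2 : c i = d := by simp [hc]
    omega
  have hcoe : ∀ β : Fin N →₀ ℕ,
      q.coeff β = if β ∈ S then φ ((MvPolynomial.monomial β) 1) else 0 := by
    intro β
    rw [hqdef]
    simp only [MvPolynomial.coeff_sum, MvPolynomial.coeff_monomial]
    exact Finset.sum_ite_eq' S β _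
  have key : ∀ g : PolyR N, dapply q g = φ (T g) := by
    intro g
    show ∑ α ∈ g.support, q.coeff α * g.coeff α = _
    rw [← Finset.sum_filter_add_sum_filter_not g.support (fun α => ∑ i, α i ≤ d)]
    have h0 : ∑ α ∈ g.support.filter (fun α => ¬ ∑ i, α i ≤ d),
        q.coeff α * g.coeff α = 0 := by
      apply Finset.sum_eq_zero
      intro α hα
      rw [hcoe, if_neg, zero_mul]
      intro hin
      rw [hS, Finset.mem_filter] at hin
      exact (Finset.mem_filter.mp hα).2 hin.2
    rw [h0, add_zero, hT, map_sum]
    refine Finset.sum_congr rfl fun α hα => ?_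
    rw [hcoe, if_pos (hmemS α (Finset.mem_filter.mp hα).2)]
    have hm : (MvPolynomial.monomial α) (g.coeff α)
        = g.coeff α • (MvPolynomial.monomial α) 1 := by
      rw [MvPolynomial.smul_monomial, smul_eq_mul, mul_one]
    rw [hm, map_smul, smul_eq_mul, mul_comm]
  have hqmem : q ∈ truncDual I d := by
    refine Submodule.mem_inf.mpr ⟨?_, ?_⟩
    · intro g hg
      rw [key g]
      exact hφW' _ (Submodule.mem_sup_left (trunc_memJ g hg))
    · intro β hβ
      by_contra hc2
      have : q.coeff β = 0 := by
        rw [hcoe, if_neg]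
        intro hin
        rw [hS, Finset.mem_filter] at hin
        exact hc2 hin.2
      exact (MvPolynomial.mem_support_iff.mp hβ) this
  have hTf : T f = f := by
    simp only [hT]
    rw [Finset.filter_true_of_mem (fun α hα => le_trans (sum_univ_le_totalDegree hα) hf)]
    exact MvPolynomial.support_sum_monomial_coeff f
  apply hφf
  rw [← hTf, ← key f]
  exact hq q hqmem
end
end

section
/- For ideals I_1, I_2 ⊆ R = ℂ[x_1,…,x_N]: (a) D_0[I_1 + I_2] = D_0[I_1] ∩ D_0[I_2], and (b) D_0[I_1 ∩ I_2] = D_0[I_1] + D_0[I_2] (sum of ℂ-subspaces of D_0). -/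
open MvPolynomial

noncomputable section

namespace Statement7Aux

variable {N : ℕ}

lemma dapply_eq_sum_of_subset {q f : PolyR N} {s : Finset (Fin N →₀ ℕ)}
    (h : f.support ⊆ s) : dapply q f = ∑ α ∈ s, q.coeff α * f.coeff α := by
  refine Finset.sum_subset h fun α _ hα => ?_
  rw [MvPolynomial.notMem_support_iff.mp hα, mul_zero]

lemma dapply_eq_sum_left (q f : PolyR N) :
    dapply q f = ∑ α ∈ q.support, q.coeff α * f.coeff α := by
  rw [dapply_eq_sum_of_subset (s := f.support ∪ q.support) Finset.subset_union_left]
  symm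
  refine Finset.sum_subset Finset.subset_union_right fun α _ hα => ?_
  rw [MvPolynomial.notMem_support_iff.mp hα, zero_mul]

lemma dapply_add_right (q f g : PolyR N) :
    dapply q (f + g) = dapply q f + dapply q g := by
  rw [dapply_eq_sum_left, dapply_eq_sum_left, dapply_eq_sum_left,
    ← Finset.sum_add_distrib]
  exact Finset.sum_congr rfl fun α _ => by rw [MvPolynomial.coeff_add, mul_add]

lemma dapply_smul_right (c : ℂ) (q f : PolyR N) :
    dapply q (c • f) = c * dapply q f := by
  rw [dapply_eq_sum_left, dapply_eq_sum_left, Finset.mul_sum]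
  exact Finset.sum_congr rfl fun α _ => by
    rw [MvPolynomial.coeff_smul, smul_eq_mul]; ring

lemma dapply_add_left (q r f : PolyR N) :
    dapply (q + r) f = dapply q f + dapply r f := by
  unfold dapply
  rw [← Finset.sum_add_distrib]
  exact Finset.sum_congr rfl fun α _ => by rw [MvPolynomial.coeff_add, add_mul]

lemma dapply_smul_left (c : ℂ) (q f : PolyR N) :
    dapply (c • q) f = c * dapply q f := by
  unfold dapply
  rw [Finset.mul_sum]
  exact Finset.sum_congr rfl fun α _ => by
    rw [MvPolynomial.coeff_smul, smul_eq_mul]; ring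

/-- The pairing as a bilinear map. -/
def B (N : ℕ) : PolyR N →ₗ[ℂ] PolyR N →ₗ[ℂ] ℂ :=
  LinearMap.mk₂ ℂ dapply dapply_add_left dapply_smul_left dapply_add_right
    dapply_smul_right

@[simp] lemma B_apply (q f : PolyR N) : B N q f = dapply q f := rfl

/-- The ideal of polynomials of order at least `n`. -/
def ordIdeal (N n : ℕ) : Ideal (PolyR N) where
  carrier := {f | ∀ α : Fin N →₀ ℕ, (∑ i, α i) < n → f.coeff α = 0}
  zero_mem' := fun α _ => by simp
  add_mem' := by
    intro a b ha hb α h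
    rw [MvPolynomial.coeff_add, ha α h, hb α h, add_zero]
  smul_mem' := by
    intro g f hf α h
    rw [smul_eq_mul, MvPolynomial.coeff_mul]
    apply Finset.sum_eq_zero
    intro x hx
    have hx' : x.1 + x.2 = α := Finset.HasAntidiagonal.mem_antidiagonal.mp hx
    have hle : (∑ i, x.2 i) ≤ ∑ i, α i := by
      rw [← hx']
      refine Finset.sum_le_sum fun i _ => ?_
      simp [Finsupp.add_apply]
    rw [hf x.2 (lt_of_le_of_lt hle h), mul_zero]

lemma mem_ordIdeal {n : ℕ} {f : PolyR N} :
    f ∈ ordIdeal N n ↔ ∀ α : Fin N →₀ ℕ, (∑ i, α i) < n → f.coeff α = 0 :=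
  Iff.rfl

lemma mul_mem_ordIdeal {a b : ℕ} {f g : PolyR N} (hf : f ∈ ordIdeal N a)
    (hg : g ∈ ordIdeal N b) : f * g ∈ ordIdeal N (a + b) := by
  intro α hα
  rw [MvPolynomial.coeff_mul]
  apply Finset.sum_eq_zero
  intro x hx
  have hx' : x.1 + x.2 = α := Finset.HasAntidiagonal.mem_antidiagonal.mp hx
  have hsum : (∑ i, x.1 i) + (∑ i, x.2 i) = ∑ i, α i := by
    rw [← hx', ← Finset.sum_add_distrib]
    exact Finset.sum_congr rfl fun i _ => by simp [Finsupp.add_apply]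
  rcases Nat.lt_or_ge (∑ i, x.1 i) a with h | h
  · rw [hf x.1 h, zero_mul]
  · rw [hg x.2 (by omega), mul_zero]

lemma monomial_mem_pow (c : ℂ) :
    ∀ (n : ℕ) (α : Fin N →₀ ℕ), n ≤ ∑ i, α i →
      (MvPolynomial.monomial α c : PolyR N) ∈ ordIdeal N 1 ^ n := by
  intro n
  induction n with
  | zero => intro α _; simp
  | succ n ih =>
    intro α hα
    have hne : ∃ i, α i ≠ 0 := by
      by_contra h
      push_neg at h
      simp [h] at hα
    obtain ⟨i, hi⟩ := hne
    set β : Fin N →₀ ℕ := α - Finsupp.single i 1 with hβdef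
    have hdecomp : Finsupp.single i 1 + β = α := by
      ext j
      rw [Finsupp.add_apply, hβdef, Finsupp.tsub_apply]
      rcases eq_or_ne j i with rfl | hji
      · simp only [Finsupp.single_eq_same]
        omega
      · simp [Finsupp.single_apply, Ne.symm hji]
    have hXmem : (MvPolynomial.X i : PolyR N) ∈ ordIdeal N 1 := by
      intro β hβ
      have hβ0 : β = 0 := by
        ext j
        have := Finset.sum_eq_zero_iff.mp (Nat.lt_one_iff.mp hβ) j (Finset.mem_univ j)
        exact this
      rw [hβ0]
      simp
    have hsum : n ≤ ∑ j, β j := by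
      have h1 : (∑ j, Finsupp.single i (1:ℕ) j) = 1 := by
        simp [Finsupp.single_apply]
      have h2 : (∑ j, (Finsupp.single i (1:ℕ)) j) + ∑ j, β j
          = ∑ j, α j := by
        rw [← Finset.sum_add_distrib]
        refine Finset.sum_congr rfl fun j _ => ?_
        rw [← Finsupp.add_apply, hdecomp]
      omega
    have hmul : (MvPolynomial.monomial α c : PolyR N)
        = MvPolynomial.X i * MvPolynomial.monomial β c := by
      rw [MvPolynomial.X, MvPolynomial.monomial_mul, one_mul, hdecomp]
    rw [hmul, pow_succ']
    exact Ideal.mul_mem_mul hXmem (ih _ hsum)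

lemma ordIdeal_one_pow (n : ℕ) : ordIdeal N 1 ^ n = ordIdeal N n := by
  apply le_antisymm
  · induction n with
    | zero =>
      intro f _
      intro α h
      omega
    | succ n ih =>
      rw [pow_succ]
      refine le_trans (Ideal.mul_le.mpr fun r hr s hs => ?_) le_rfl
      exact mul_mem_ordIdeal (ih hr) hs
  · intro f hf
    rw [← MvPolynomial.support_sum_monomial_coeff f]
    apply Ideal.sum_mem
    intro α hα
    apply monomial_mem_pow
    by_contra h
    push_neg at h
    exact MvPolynomial.mem_support_iff.mp hα (hf α h)

set_option maxHeartbeats 1000000 in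
lemma artinRees (I₁ I₂ : Ideal (PolyR N)) (n : ℕ) :
    ∃ M : ℕ, n ≤ M ∧
      (I₁ ⊔ ordIdeal N M) ⊓ (I₂ ⊔ ordIdeal N M) ≤ (I₁ ⊓ I₂) ⊔ ordIdeal N n := by
  obtain ⟨c, hc⟩ := Ideal.exists_pow_inf_eq_pow_smul (R := PolyR N) (M := PolyR N)
    (ordIdeal N 1) (I₁ ⊔ I₂ : Ideal (PolyR N))
  refine ⟨n + c, Nat.le_add_right _ _, ?_⟩
  intro z hz
  obtain ⟨hz1, hz2⟩ := hz
  obtain ⟨a₁, ha₁, u₁, hu₁, hzu₁⟩ := Submodule.mem_sup.mp hz1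
  obtain ⟨a₂, ha₂, u₂, hu₂, hzu₂⟩ := Submodule.mem_sup.mp hz2
  rw [← ordIdeal_one_pow] at hu₁ hu₂
  set A : Ideal (PolyR N) := ordIdeal N 1 with hA
  have hdiff : a₁ - a₂ ∈ A ^ (n + c) • (⊤ : Submodule (PolyR N) (PolyR N))
      ⊓ (I₁ ⊔ I₂ : Ideal (PolyR N)) := by
    constructor
    · have h1 : a₁ - a₂ = u₂ - u₁ := by
        have : a₁ + u₁ = a₂ + u₂ := by rw [hzu₁, hzu₂]
        linear_combination this
      rw [Ideal.smul_eq_mul, Ideal.mul_top, h1]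
      exact sub_mem hu₂ hu₁
    · exact sub_mem (Submodule.mem_sup_left ha₁) (Submodule.mem_sup_right ha₂)
  rw [hc (n + c) (Nat.le_add_left _ _)] at hdiff
  have hdiff2 : a₁ - a₂ ∈ A ^ n * I₁ ⊔ A ^ n * I₂ := by
    have h1 : A ^ (n + c - c) • ((A ^ c • (⊤ : Submodule (PolyR N) (PolyR N)))
        ⊓ (I₁ ⊔ I₂ : Ideal (PolyR N))) ≤ A ^ n * I₁ ⊔ A ^ n * I₂ := by
      rw [Nat.add_sub_cancel, Ideal.smul_eq_mul]
      refine le_trans (Ideal.mul_mono_right inf_le_right) ?_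
      rw [Ideal.mul_sup]
    exact h1 hdiff
  obtain ⟨b₁, hb₁, b₂, hb₂, hb⟩ := Submodule.mem_sup.mp hdiff2
  have key1 : a₁ - b₁ ∈ I₁ ⊓ I₂ := by
    refine Submodule.mem_inf.mpr ⟨?_, ?_⟩
    · exact sub_mem ha₁ (Ideal.mul_le_right (I := A ^ n) hb₁)
    · have : a₁ - b₁ = a₂ + b₂ := by linear_combination -hb
      rw [this]
      exact add_mem ha₂ (Ideal.mul_le_right (I := A ^ n) hb₂)
  have key2 : b₁ + u₁ ∈ ordIdeal N n := by
    rw [← ordIdeal_one_pow]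
    exact add_mem (Ideal.mul_le_left (I := A ^ n) hb₁)
      (Ideal.pow_le_pow_right (Nat.le_add_right _ _) hu₁)
  refine Submodule.mem_sup.mpr ⟨a₁ - b₁, key1, b₁ + u₁, key2, ?_⟩
  rw [← hzu₁]
  ring

/-- The finite-dimensional space of functionals of order `< M`. -/
def VS (N M : ℕ) : Submodule ℂ (PolyR N) := expSupported (fun α => (∑ i, α i) < M)

lemma dapply_eq_zero_of_ord {M : ℕ} {q g : PolyR N} (hq : q ∈ VS N M)
    (hg : g ∈ ordIdeal N M) : dapply q g = 0 := by
  rw [dapply_eq_sum_left]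
  exact Finset.sum_eq_zero fun α hα => by rw [hg α (hq α hα), mul_zero]

instance VS_finiteDimensional (M : ℕ) : FiniteDimensional ℂ (VS N M) := by
  classical
  set c : Fin N →₀ ℕ := Finsupp.equivFunOnFinite.symm (fun _ => M) with hcdef
  have hc : ∀ i, c i = M := fun i => rfl
  haveI : FiniteDimensional ℂ (Submodule.span ℂ
      ((fun α => (MvPolynomial.monomial α 1 : PolyR N)) '' ↑(Finset.Iic c))) :=
    FiniteDimensional.span_of_finite ℂ ((Finset.Iic c).finite_toSet.image _)
  refine Submodule.finiteDimensional_of_le (S₂ := Submodule.span ℂ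
      ((fun α => (MvPolynomial.monomial α 1 : PolyR N)) '' ↑(Finset.Iic c))) ?_
  intro q hq
  rw [← MvPolynomial.support_sum_monomial_coeff q]
  apply Submodule.sum_mem
  intro α hα
  have h1 : (MvPolynomial.monomial α (q.coeff α) : PolyR N)
      = q.coeff α • MvPolynomial.monomial α 1 := by
    rw [MvPolynomial.smul_monomial, smul_eq_mul, mul_one]
  rw [h1]
  apply Submodule.smul_mem
  apply Submodule.subset_span
  refine ⟨α, ?_, rfl⟩
  simp only [Finset.coe_Iic, Set.mem_Iic]
  intro j
  have := hq α hα
  have hle : α j ≤ ∑ i, α i :=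
    Finset.single_le_sum (fun i _ => Nat.zero_le _) (Finset.mem_univ j)
  rw [hc j]
  omega

/-- The pairing restricted to `VS N M`, as a map to the dual. -/
def Phi (N M : ℕ) : VS N M →ₗ[ℂ] Module.Dual ℂ (VS N M) :=
  (B N).domRestrict₁₂ (VS N M) (VS N M)

@[simp] lemma Phi_apply {M : ℕ} (q f : VS N M) :
    Phi N M q f = dapply (q : PolyR N) (f : PolyR N) := rfl

lemma Phi_injective (M : ℕ) : Function.Injective (Phi N M) := by
  rw [← LinearMap.ker_eq_bot] at *
  rw [LinearMap.ker_eq_bot']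
  intro q hq
  refine Subtype.ext ?_
  rw [ZeroMemClass.coe_zero]
  apply MvPolynomial.ext
  intro α
  rw [MvPolynomial.coeff_zero]
  by_cases h : (∑ i, α i) < M
  · have hmono : (MvPolynomial.monomial α 1 : PolyR N) ∈ VS N M := by
      intro β hβ
      rw [MvPolynomial.support_monomial] at hβ
      simp only [if_neg (one_ne_zero (α := ℂ)), Finset.mem_singleton] at hβ
      rwa [hβ]
    have := congrFun (congrArg DFunLike.coe hq) ⟨MvPolynomial.monomial α 1, hmono⟩
    rw [Phi_apply] at this
    simp only [LinearMap.zero_apply] at this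
    rw [dapply] at this
    rw [MvPolynomial.support_monomial, if_neg (one_ne_zero (α := ℂ))] at this
    simpa [MvPolynomial.coeff_monomial] using this
  · by_contra hne
    exact h (q.2 α (MvPolynomial.mem_support_iff.mpr hne))

lemma Phi_surjective (M : ℕ) : Function.Surjective (Phi N M) :=
  (LinearMap.injective_iff_surjective_of_finrank_eq_finrank
    Subspace.dual_finrank_eq.symm).mp (Phi_injective M)

/-- Low-degree truncation. -/
def lowPart (M : ℕ) (f : PolyR N) : PolyR N :=
  ∑ α ∈ f.support.filter (fun α => (∑ i, α i) < M),
    MvPolynomial.monomial α (f.coeff α)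

lemma coeff_lowPart (M : ℕ) (f : PolyR N) (α : Fin N →₀ ℕ) :
    (lowPart M f).coeff α = if (∑ i, α i) < M then f.coeff α else 0 := by
  classical
  rw [lowPart, MvPolynomial.coeff_sum]
  simp only [MvPolynomial.coeff_monomial]
  rw [Finset.sum_ite_eq']
  by_cases h : (∑ i, α i) < M
  · rw [if_pos h]
    by_cases hs : α ∈ f.support
    · rw [if_pos (Finset.mem_filter.mpr ⟨hs, h⟩)]
    · rw [if_neg (fun hmem => hs (Finset.mem_filter.mp hmem).1),
        MvPolynomial.notMem_support_iff.mp hs]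
  · rw [if_neg h]
    have hno : α ∉ Finset.filter (fun α => (∑ i, α i) < M) f.support :=
      fun hmem => h (Finset.mem_filter.mp hmem).2
    exact if_neg hno

lemma lowPart_mem_VS (M : ℕ) (f : PolyR N) : lowPart M f ∈ VS N M := by
  intro α hα
  by_contra h
  exact MvPolynomial.mem_support_iff.mp hα (by rw [coeff_lowPart, if_neg h])

lemma sub_lowPart_mem_ord (M : ℕ) (f : PolyR N) :
    f - lowPart M f ∈ ordIdeal N M := by
  intro α h
  rw [MvPolynomial.coeff_sub, coeff_lowPart, if_pos h, sub_self]

lemma decompose {M : ℕ} (J₁ J₂ : Ideal (PolyR N)) (h₁ : ordIdeal N M ≤ J₁)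
    (h₂ : ordIdeal N M ≤ J₂) {q : PolyR N} (hqV : q ∈ VS N M)
    (hq : q ∈ dualSpace (J₁ ⊓ J₂)) :
    ∃ q₁ ∈ dualSpace J₁, ∃ q₂ ∈ dualSpace J₂, q = q₁ + q₂ := by
  classical
  set U₁ : Submodule ℂ (VS N M) :=
    Submodule.comap (VS N M).subtype (J₁.restrictScalars ℂ) with hU₁
  set U₂ : Submodule ℂ (VS N M) :=
    Submodule.comap (VS N M).subtype (J₂.restrictScalars ℂ) with hU₂
  have hann : Phi N M ⟨q, hqV⟩ ∈ Submodule.dualAnnihilator (U₁ ⊓ U₂) := by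
    rw [Submodule.mem_dualAnnihilator]
    intro f hf
    exact hq f (⟨hf.1, hf.2⟩ : (f : PolyR N) ∈ J₁ ⊓ J₂)
  rw [Subspace.dualAnnihilator_inf_eq] at hann
  obtain ⟨φ₁, hφ₁, φ₂, hφ₂, hφ⟩ := Submodule.mem_sup.mp hann
  obtain ⟨q₁, hq₁⟩ := Phi_surjective M φ₁
  obtain ⟨q₂, hq₂⟩ := Phi_surjective M φ₂
  have hsum : q₁ + q₂ = ⟨q, hqV⟩ := by
    apply Phi_injective M
    rw [map_add, hq₁, hq₂, hφ]
  have key : ∀ (J : Ideal (PolyR N)), ordIdeal N M ≤ J →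
      ∀ (r : VS N M), (∀ g ∈ Submodule.comap (VS N M).subtype (J.restrictScalars ℂ),
        dapply (r : PolyR N) (g : PolyR N) = 0) → (r : PolyR N) ∈ dualSpace J := by
    intro J hJ r hr f hf
    have hlow : lowPart M f ∈ J := by
      have : f - (f - lowPart M f) = lowPart M f := by ring
      rw [← this]
      exact sub_mem hf (hJ (sub_lowPart_mem_ord M f))
    have hdecomp : f = lowPart M f + (f - lowPart M f) := by ring
    rw [hdecomp, dapply_add_right,
      dapply_eq_zero_of_ord r.2 (sub_lowPart_mem_ord M f),
      hr ⟨lowPart M f, lowPart_mem_VS M f⟩ hlow, add_zero]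
  refine ⟨q₁, key J₁ h₁ q₁ ?_, q₂, key J₂ h₂ q₂ ?_, ?_⟩
  · intro g hg
    have := (Submodule.mem_dualAnnihilator φ₁).mp hφ₁ g hg
    rw [← hq₁] at this
    exact this
  · intro g hg
    have := (Submodule.mem_dualAnnihilator φ₂).mp hφ₂ g hg
    rw [← hq₂] at this
    exact this
  · have := congrArg (Subtype.val) hsum
    simpa using this.symm

lemma dualSpace_anti {I J : Ideal (PolyR N)} (h : I ≤ J) :
    dualSpace J ≤ dualSpace I := fun q hq f hf => hq f (h hf)

end Statement7Aux
/-- `D_0[I₁ + I₂] = D_0[I₁] ∩ D_0[I₂]` and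
`D_0[I₁ ∩ I₂] = D_0[I₁] + D_0[I₂]`. -/
theorem statement7 {N : ℕ} (hN : 1 ≤ N) (I₁ I₂ : Ideal (PolyR N)) :
    dualSpace (I₁ + I₂) = dualSpace I₁ ⊓ dualSpace I₂ ∧
    dualSpace (I₁ ⊓ I₂) = dualSpace I₁ ⊔ dualSpace I₂ := by
  classical
  constructor
  · apply le_antisymm
    · rw [Submodule.add_eq_sup]
      exact le_inf (Statement7Aux.dualSpace_anti le_sup_left)
        (Statement7Aux.dualSpace_anti le_sup_right)
    · intro q hq f hf
      rw [Submodule.add_eq_sup] at hf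
      obtain ⟨f₁, hf₁, f₂, hf₂, rfl⟩ := Submodule.mem_sup.mp hf
      rw [Statement7Aux.dapply_add_right, hq.1 f₁ hf₁, hq.2 f₂ hf₂, add_zero]
  · apply le_antisymm
    · intro q hq
      set k := q.totalDegree with hk
      have hdeg : ∀ α ∈ q.support, (∑ i, α i) ≤ k := by
        intro α hα
        have h1 := MvPolynomial.le_totalDegree hα
        rwa [Finsupp.sum_fintype _ _ (fun _ => rfl)] at h1
      obtain ⟨M, hnM, hAR⟩ := Statement7Aux.artinRees I₁ I₂ (k + 1)
      have hqV : q ∈ Statement7Aux.VS N M := fun α hα =>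
        lt_of_lt_of_le (Nat.lt_succ_of_le (hdeg α hα)) hnM
      have hq' : q ∈ dualSpace ((I₁ ⊔ Statement7Aux.ordIdeal N M)
          ⊓ (I₂ ⊔ Statement7Aux.ordIdeal N M)) := by
        intro f hf
        obtain ⟨g, hg, h, hh, rfl⟩ := Submodule.mem_sup.mp (hAR hf)
        have hqV' : q ∈ Statement7Aux.VS N (k + 1) := fun α hα =>
          Nat.lt_succ_of_le (hdeg α hα)
        rw [Statement7Aux.dapply_add_right, hq g hg,
          Statement7Aux.dapply_eq_zero_of_ord hqV' hh, add_zero]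
      obtain ⟨q₁, hq₁, q₂, hq₂, hsum⟩ :=
        Statement7Aux.decompose _ _ le_sup_right le_sup_right hqV hq'
      exact Submodule.mem_sup.mpr ⟨q₁, Statement7Aux.dualSpace_anti le_sup_left hq₁,
        q₂, Statement7Aux.dualSpace_anti le_sup_left hq₂, hsum.symm⟩
    · exact sup_le (Statement7Aux.dualSpace_anti inf_le_left)
        (Statement7Aux.dualSpace_anti inf_le_right)
end
end

section
/- Let ⪯ be a monomial order on ℕ^N and let I ⊆ R = ℂ[x_1,…,x_N] be an ideal whose dual space D_0[I] is finite-dimensional over ℂ. Then the set of dual initial exponents of the dual space equals the complement of the set of local initial exponents of I: in(D_0[I]) = ℕ^N \ in(I). -/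
open MvPolynomial

noncomputable section

/-- Given a monomial order `le` on `ℕ^N`, the set of local initial exponents of an
ideal `I`: `in(f)` is the `le`-smallest exponent in the support of a nonzero
`f ∈ I` (the initial term for the local order opposite to `le`). -/
def localIn {N : ℕ} (le : (Fin N →₀ ℕ) → (Fin N →₀ ℕ) → Prop)
    (I : Ideal (PolyR N)) : Set (Fin N →₀ ℕ) :=
  {α | ∃ f ∈ I, f ≠ 0 ∧ α ∈ f.support ∧ ∀ β ∈ f.support, le α β}

/-- Given a monomial order `le` on `ℕ^N`, the set of dual initial exponents of a
subspace `L ⊆ D_0`: `in(q)` is the `le`-largest exponent in the support of a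
nonzero `q ∈ L`. -/
def dualIn {N : ℕ} (le : (Fin N →₀ ℕ) → (Fin N →₀ ℕ) → Prop)
    (L : Submodule ℂ (PolyR N)) : Set (Fin N →₀ ℕ) :=
  {α | ∃ q ∈ L, q ≠ 0 ∧ α ∈ q.support ∧ ∀ β ∈ q.support, le β α}

set_option maxHeartbeats 1000000
set_option synthInstance.maxHeartbeats 400000
namespace MacaulayAux
variable {N : ℕ} {le : (Fin N →₀ ℕ) → (Fin N →₀ ℕ) → Prop}

lemma dapply_eq (q f : PolyR N) (s : Finset (Fin N →₀ ℕ))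
    (h : q.support ∩ f.support ⊆ s) :
    dapply q f = ∑ β ∈ s, q.coeff β * f.coeff β := by
  classical
  have h1 : dapply q f = ∑ β ∈ s ∪ f.support, q.coeff β * f.coeff β := by
    unfold dapply
    refine Finset.sum_subset Finset.subset_union_right ?_
    intro β _ hβ
    rw [MvPolynomial.notMem_support_iff.mp hβ, mul_zero]
  rw [h1]
  refine (Finset.sum_subset Finset.subset_union_left ?_).symm
  intro β hβ hβs
  rcases Finset.mem_union.mp hβ with h' | h'
  · exact absurd h' hβs
  · have : β ∉ q.support := fun hq => hβs (h (Finset.mem_inter.mpr ⟨hq, h'⟩))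
    rw [MvPolynomial.notMem_support_iff.mp this, zero_mul]

lemma dapply_monomial (q : PolyR N) (β : Fin N →₀ ℕ) (c : ℂ) :
    dapply q (monomial β c) = q.coeff β * c := by
  classical
  rw [dapply_eq q _ {β} (by
    intro γ hγ
    have := Finset.mem_inter.mp hγ
    have h2 := MvPolynomial.support_monomial (a := c) (s := β) ▸ this.2
    by_cases hc : c = 0 <;> simp [hc] at h2 <;> simp [h2])]
  simp [MvPolynomial.coeff_monomial]





/-- Separation lemma. -/
lemma sep (W : Submodule ℂ (PolyR N)) (E : Finset (Fin N →₀ ℕ))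
    (hW : ∀ β ∉ E, (monomial β (1:ℂ)) ∈ W) (v : PolyR N) (hv : v ∉ W) :
    ∃ q : PolyR N, (∀ f ∈ W, dapply q f = 0) ∧ dapply q v ≠ 0 := by
  classical
  have hmk : (Submodule.Quotient.mk v : PolyR N ⧸ W) ≠ 0 := by
    simpa [Submodule.Quotient.mk_eq_zero] using hv
  obtain ⟨φ, hφ⟩ : ∃ φ : Module.Dual ℂ (PolyR N ⧸ W),
      φ (Submodule.Quotient.mk v) ≠ 0 := by
    by_contra hcon
    push_neg at hcon
    exact hmk ((Module.forall_dual_apply_eq_zero_iff ℂ _).mp hcon)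
  set lam : PolyR N →ₗ[ℂ] ℂ := φ.comp W.mkQ with hlam
  have hlamW : ∀ f ∈ W, lam f = 0 := by
    intro f hf
    have : W.mkQ f = 0 := by
      rwa [← LinearMap.mem_ker, Submodule.ker_mkQ]
    simp [hlam, this]
  set q : PolyR N := ∑ β ∈ E, monomial β (lam (monomial β 1)) with hq
  have hqsupp : q.support ⊆ E := by
    refine (MvPolynomial.support_sum).trans ?_
    intro γ hγ
    simp only [Finset.mem_biUnion] at hγ
    obtain ⟨β, hβE, hβ⟩ := hγ
    have := MvPolynomial.support_monomial_subset hβ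
    simp only [Finset.mem_singleton] at this
    exact this ▸ hβE
  have hqcoeff : ∀ β ∈ E, q.coeff β = lam (monomial β 1) := by
    intro β hβ
    rw [hq, MvPolynomial.coeff_sum]
    rw [Finset.sum_eq_single β (fun γ _ hγ => by
      rw [MvPolynomial.coeff_monomial, if_neg hγ]) (fun h => absurd hβ h)]
    rw [MvPolynomial.coeff_monomial, if_pos rfl]
  -- key : dapply q f = lam f for all f
  have key : ∀ f : PolyR N, dapply q f = lam f := by
    intro f
    rw [dapply_eq q f (E ∩ f.support)
      (Finset.inter_subset_inter_right hqsupp)]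
    have h1 : ∀ β ∈ E ∩ f.support, q.coeff β * f.coeff β
        = lam (monomial β (f.coeff β)) := by
      intro β hβ
      rw [hqcoeff β (Finset.mem_inter.mp hβ).1]
      have : (monomial β (f.coeff β)) = f.coeff β • monomial β (1:ℂ) := by
        rw [MvPolynomial.smul_monomial, smul_eq_mul, mul_one]
      rw [this, map_smul, smul_eq_mul, mul_comm]
    rw [Finset.sum_congr rfl h1, ← map_sum]
    have hsplit : f = (∑ β ∈ E ∩ f.support, monomial β (f.coeff β))
        + (∑ β ∈ f.support \ E, monomial β (f.coeff β)) := by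
      rw [Finset.inter_comm]
      rw [Finset.sum_inter_add_sum_sdiff f.support E (fun β => monomial β (f.coeff β))]
      exact (MvPolynomial.as_sum f)
    have hrest : (∑ β ∈ f.support \ E, monomial β (f.coeff β)) ∈ W := by
      refine Submodule.sum_mem _ ?_
      intro β hβ
      have hβE : β ∉ E := (Finset.mem_sdiff.mp hβ).2
      have : (monomial β (f.coeff β)) = f.coeff β • monomial β (1:ℂ) := by
        rw [MvPolynomial.smul_monomial, smul_eq_mul, mul_one]
      rw [this]
      exact W.smul_mem _ (hW β hβE)
    calc lam (∑ β ∈ E ∩ f.support, monomial β (f.coeff β))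
        = lam (∑ β ∈ E ∩ f.support, monomial β (f.coeff β))
          + lam (∑ β ∈ f.support \ E, monomial β (f.coeff β)) := by
          rw [hlamW _ hrest, add_zero]
      _ = lam f := by rw [← map_add, ← hsplit]
  refine ⟨q, fun f hf => by rw [key]; exact hlamW f hf, ?_⟩
  rw [key]
  simpa [hlam] using hφ







lemma X_mem_mIdeal (i : Fin N) : (X i : PolyR N) ∈ mIdeal N :=
  Ideal.subset_span ⟨i, rfl⟩

lemma constantCoeff_eq_zero_of_mem_mIdeal {f : PolyR N} (h : f ∈ mIdeal N) :
    constantCoeff f = 0 := by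
  have : mIdeal N ≤ RingHom.ker (constantCoeff (σ := Fin N) (R := ℂ)) := by
    rw [mIdeal, Ideal.span_le]
    rintro g ⟨i, rfl⟩
    simp [RingHom.mem_ker]
  exact this h

lemma monomial_mem_pow (K : ℕ) (β : Fin N →₀ ℕ) (c : ℂ) (h : K ≤ ∑ i, β i) :
    (monomial β c) ∈ (mIdeal N) ^ K := by
  classical
  induction K generalizing β with
  | zero => simp
  | succ K ih =>
    have hpos : 0 < ∑ i, β i := lt_of_lt_of_le (Nat.succ_pos K) h
    obtain ⟨i, hi⟩ : ∃ i, β i ≠ 0 := by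
      by_contra hcon
      push_neg at hcon
      simp [hcon] at hpos
    set β' : Fin N →₀ ℕ := β - Finsupp.single i 1 with hβ'
    have hadd : Finsupp.single i 1 + β' = β := by
      ext j
      simp only [Finsupp.add_apply, Finsupp.tsub_apply, hβ', Finsupp.single_apply]
      by_cases hj : i = j
      · subst hj; rw [if_pos rfl]; omega
      · simp [hj]
    have hsum : ∑ j, β' j = (∑ j, β j) - 1 := by
      have h1 : (∑ j, Finsupp.single i (1:ℕ) j) + ∑ j, β' j = ∑ j, β j := by
        rw [← Finset.sum_add_distrib]
        exact Finset.sum_congr rfl fun j _ => by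
          rw [← Finsupp.add_apply, hadd]
      have h2 : (∑ j, Finsupp.single i (1:ℕ) j) = 1 := by
        simp [Finsupp.single_apply]
      omega
    have hK : K ≤ ∑ j, β' j := by omega
    have : (monomial β c : PolyR N) = X i * monomial β' c := by
      rw [X, monomial_mul, one_mul, hadd]
    rw [this, pow_succ, mul_comm ((mIdeal N) ^ K) (mIdeal N)]
    exact Ideal.mul_mem_mul (X_mem_mIdeal i) (ih β' hK)

lemma notmem_Iic_sum {K : ℕ} {β : Fin N →₀ ℕ}
    (h : β ∉ Finset.Iic (Finsupp.equivFunOnFinite.symm fun _ : Fin N => K)) :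
    K + 1 ≤ ∑ i, β i := by
  classical
  rw [Finset.mem_Iic] at h
  have : ∃ i, ¬ β i ≤ K := by
    by_contra hcon
    push_neg at hcon
    exact h (Finsupp.le_def.mpr fun i => by simpa using hcon i)
  obtain ⟨i, hi⟩ := this
  calc K + 1 ≤ β i := by omega
    _ ≤ ∑ j, β j := Finset.single_le_sum (fun j _ => Nat.zero_le _) (Finset.mem_univ i)

/-- Nakayama-style unit lemma. -/
lemma exists_unit (I : Ideal (PolyR N)) (K : ℕ)
    (h : (mIdeal N) ^ K ≤ I ⊔ (mIdeal N) ^ (K + 1)) :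
    ∃ u : PolyR N, constantCoeff u ≠ 0 ∧ ∀ g ∈ (mIdeal N) ^ K, u * g ∈ I := by
  set M' : Submodule (PolyR N) (PolyR N ⧸ I) :=
    Submodule.map I.mkQ ((mIdeal N) ^ K) with hM'
  have hfg : M'.FG := (IsNoetherian.noetherian _).map _
  have hle : M' ≤ (mIdeal N) • M' := by
    rw [hM']
    calc Submodule.map I.mkQ ((mIdeal N) ^ K)
        ≤ Submodule.map I.mkQ (I ⊔ (mIdeal N) ^ (K+1)) := Submodule.map_mono h
      _ = Submodule.map I.mkQ I ⊔ Submodule.map I.mkQ ((mIdeal N) ^ (K+1)) :=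
          Submodule.map_sup _ _ _
      _ ≤ ⊥ ⊔ Submodule.map I.mkQ ((mIdeal N) ^ (K+1)) := by
          refine sup_le_sup_right ?_ _
          rw [Submodule.map_le_iff_le_comap, Submodule.comap_bot, Submodule.ker_mkQ]
      _ = Submodule.map I.mkQ ((mIdeal N) ^ (K+1)) := bot_sup_eq _
      _ = Submodule.map I.mkQ ((mIdeal N) • (mIdeal N) ^ K) := by
          rw [Ideal.smul_eq_mul, ← pow_succ']
      _ = (mIdeal N) • Submodule.map I.mkQ ((mIdeal N) ^ K) :=
          Submodule.map_smul'' _ _ _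
  obtain ⟨r, hr1, hr2⟩ :=
    Submodule.exists_sub_one_mem_and_smul_eq_zero_of_fg_of_le_smul (mIdeal N) M' hfg hle
  refine ⟨r, ?_, ?_⟩
  · have h1 : constantCoeff (r - 1) = 0 := constantCoeff_eq_zero_of_mem_mIdeal hr1
    have : constantCoeff (r : PolyR N) - 1 = 0 := by
      rw [← h1]; simp
    intro hc
    rw [hc] at this
    norm_num at this
  · intro g hg
    have hmem : I.mkQ g ∈ M' := Submodule.mem_map_of_mem hg
    have h0 := hr2 _ hmem
    rw [← map_smul, smul_eq_mul] at h0
    rwa [← LinearMap.mem_ker, Submodule.ker_mkQ] at h0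






/-- multiplying by a polynomial with nonzero constant term preserves the initial exponent -/
lemma in_mul (hlin : IsLinearOrder (Fin N →₀ ℕ) le)
    (hzero : ∀ α, le 0 α) (hadd : ∀ α β γ, le α β → le (α + γ) (β + γ))
    {u f : PolyR N} (hu : constantCoeff u ≠ 0)
    {α : Fin N →₀ ℕ} (hαs : α ∈ f.support) (hmin : ∀ β ∈ f.support, le α β) :
    u * f ≠ 0 ∧ α ∈ (u * f).support ∧ ∀ β ∈ (u * f).support, le α β := by
  classical
  haveI := hlin
  have hle_self_add : ∀ (a b : Fin N →₀ ℕ), le b (a + b) := by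
    intro a b
    have := hadd 0 a b (hzero a)
    rwa [zero_add] at this
  have hcoeff : (u * f).coeff α = constantCoeff u * f.coeff α := by
    rw [MvPolynomial.coeff_mul]
    rw [Finset.sum_eq_single_of_mem ((0 : Fin N →₀ ℕ), α)
      (Finset.HasAntidiagonal.mem_antidiagonal.mpr (zero_add α)) ?_]
    · simp [MvPolynomial.constantCoeff_eq]
    · rintro ⟨a, b⟩ hab hne
      rw [Finset.HasAntidiagonal.mem_antidiagonal] at hab
      by_cases hb : f.coeff b = 0
      · rw [hb, mul_zero]
      · exfalso
        have hbs : b ∈ f.support := MvPolynomial.mem_support_iff.mpr hb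
        have h1 : le α b := hmin b hbs
        have h2 : le b α := hab ▸ hle_self_add a b
        have hba : b = α := antisymm h2 h1
        have ha0 : a = 0 := by
          rw [hba] at hab
          exact add_eq_right.mp hab
        exact hne (by simp [ha0, hba])
  have hne : (u * f).coeff α ≠ 0 :=
    hcoeff ▸ mul_ne_zero hu (MvPolynomial.mem_support_iff.mp hαs)
  refine ⟨fun h0 => hne (by rw [h0]; simp), MvPolynomial.mem_support_iff.mpr hne, ?_⟩
  intro β hβ
  have := MvPolynomial.support_mul u f hβ
  rw [Finset.mem_add] at this
  obtain ⟨a, ha, b, hb, rfl⟩ := this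
  exact hlin.toIsPartialOrder.toIsPreorder.toIsTrans.trans _ _ _ (hmin b hb) (hle_self_add a b)


lemma dualSpace_anti {I J : Ideal (PolyR N)} (h : I ≤ J) : dualSpace J ≤ dualSpace I :=
  fun q hq f hf => hq f (h hf)

lemma exists_stab (I : Ideal (PolyR N)) (hfin : FiniteDimensional ℂ (dualSpace I)) :
    ∃ K₀ : ℕ, ∀ j, K₀ ≤ j → I ⊔ (mIdeal N) ^ j = I ⊔ (mIdeal N) ^ (j + 1) := by
  classical
  set D : ℕ → Submodule ℂ (PolyR N) := fun j => dualSpace (I ⊔ (mIdeal N) ^ j) with hD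
  have hDle : ∀ j, D j ≤ dualSpace I := fun j => dualSpace_anti le_sup_left
  have hmono : ∀ i j, i ≤ j → D i ≤ D j := fun i j h =>
    dualSpace_anti (sup_le_sup_left (Ideal.pow_le_pow_right h) I)
  haveI hDfin : ∀ j, FiniteDimensional ℂ (D j) := fun j =>
    Submodule.finiteDimensional_of_le (hDle j)
  set n : ℕ → ℕ := fun j => Module.finrank ℂ (D j) with hn
  have hnbdd : ∀ j, n j ≤ Module.finrank ℂ (dualSpace I) := fun j =>
    Submodule.finrank_mono (hDle j)
  have hne : (Set.range n).Nonempty := ⟨n 0, ⟨0, rfl⟩⟩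
  have hbdd : BddAbove (Set.range n) := ⟨Module.finrank ℂ (dualSpace I), by
    rintro x ⟨j, rfl⟩; exact hnbdd j⟩
  obtain ⟨K₀, hK₀⟩ := Nat.sSup_mem hne hbdd
  have hnj : ∀ j, K₀ ≤ j → n j = n K₀ := by
    intro j hj
    refine le_antisymm ?_ ?_
    · rw [hK₀]; exact le_csSup hbdd ⟨j, rfl⟩
    · exact Submodule.finrank_mono (hmono K₀ j hj)
  have hDeq : ∀ j, K₀ ≤ j → D j = D (j + 1) := by
    intro j hj
    refine Submodule.eq_of_le_of_finrank_le (hmono j (j+1) (Nat.le_succ j)) ?_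
    show n (j+1) ≤ n j
    rw [hnj j hj, hnj (j+1) (le_trans hj (Nat.le_succ j))]
  refine ⟨K₀, ?_⟩
  intro j hj
  refine le_antisymm ?_ (sup_le_sup_left (Ideal.pow_le_pow_right (Nat.le_succ j)) I)
  intro f hf
  by_contra hfmem
  set E : Finset (Fin N →₀ ℕ) :=
    Finset.Iic (Finsupp.equivFunOnFinite.symm fun _ : Fin N => j) with hE
  have hW : ∀ β ∉ E, (monomial β (1 : ℂ)) ∈
      Submodule.restrictScalars ℂ ((I ⊔ (mIdeal N) ^ (j+1) : Ideal (PolyR N)) :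
        Submodule (PolyR N) (PolyR N)) := by
    intro β hβ
    rw [Submodule.restrictScalars_mem]
    have h1 : j + 1 ≤ ∑ i, β i := notmem_Iic_sum hβ
    exact (le_sup_right : (mIdeal N) ^ (j+1) ≤ I ⊔ (mIdeal N) ^ (j+1))
      (monomial_mem_pow (j+1) β 1 h1)
  obtain ⟨q, hq1, hq2⟩ := sep _ E hW f
    (by rw [Submodule.restrictScalars_mem]; exact hfmem)
  have hqD : q ∈ D (j + 1) := by
    intro g hg
    exact hq1 g ((Submodule.restrictScalars_mem ℂ _ g).mpr hg)
  rw [← hDeq j hj] at hqD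
  exact hq2 (hqD f hf)

end MacaulayAux


/-- If `le` is a monomial order on `ℕ^N` and `D_0[I]` is finite
dimensional, then `in(D_0[I]) = ℕ^N \ in(I)`. -/
theorem statement11 {N : ℕ} (hN : 1 ≤ N)
    (le : (Fin N →₀ ℕ) → (Fin N →₀ ℕ) → Prop)
    (hlin : IsLinearOrder (Fin N →₀ ℕ) le)
    (hzero : ∀ α, le 0 α)
    (hadd : ∀ α β γ, le α β → le (α + γ) (β + γ))
    (I : Ideal (PolyR N))
    (hfin : FiniteDimensional ℂ (dualSpace I)) :
    dualIn le (dualSpace I) = (localIn le I)ᶜ := by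
  classical
  haveI := hlin
  open MacaulayAux in
  ext α
  simp only [Set.mem_compl_iff]
  constructor
  · -- easy direction
    rintro ⟨q, hqD, hq0, hqs, hqmax⟩ ⟨f, hfI, hf0, hfs, hfmin⟩
    have h0 : dapply q f = 0 := hqD f hfI
    have h1 : dapply q f = q.coeff α * f.coeff α := by
      unfold dapply
      refine Finset.sum_eq_single_of_mem α hfs ?_
      intro β hβ hne
      have : q.coeff β = 0 := by
        by_contra hq
        have hβq : β ∈ q.support := MvPolynomial.mem_support_iff.mpr hq
        exact hne (antisymm (hqmax β hβq) (hfmin β hβ))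
      rw [this, zero_mul]
    rw [h1] at h0
    rcases mul_eq_zero.mp h0 with h | h
    · exact MvPolynomial.mem_support_iff.mp hqs h
    · exact MvPolynomial.mem_support_iff.mp hfs h
  · -- hard direction
    intro hα
    obtain ⟨K, hK⟩ := exists_stab I hfin
    have hstab : (mIdeal N) ^ K ≤ I ⊔ (mIdeal N) ^ (K + 1) := by
      calc (mIdeal N) ^ K ≤ I ⊔ (mIdeal N) ^ K := le_sup_right
        _ = I ⊔ (mIdeal N) ^ (K + 1) := hK K le_rfl
    obtain ⟨u, hu0, hu⟩ := exists_unit I K hstab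
    set E : Finset (Fin N →₀ ℕ) :=
      Finset.Iic (Finsupp.equivFunOnFinite.symm fun _ : Fin N => K) with hE
    set W : Submodule ℂ (PolyR N) :=
      Submodule.restrictScalars ℂ ((I ⊔ (mIdeal N) ^ K : Ideal (PolyR N)) :
        Submodule (PolyR N) (PolyR N)) ⊔ expSupported (fun β => ¬ le β α) with hW
    have hWmono : ∀ β ∉ E, (monomial β (1 : ℂ)) ∈ W := by
      intro β hβ
      refine Submodule.mem_sup_left ?_
      rw [Submodule.restrictScalars_mem]
      have h1 : K + 1 ≤ ∑ i, β i := notmem_Iic_sum hβ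
      exact (le_sup_right : (mIdeal N) ^ K ≤ I ⊔ (mIdeal N) ^ K)
        (monomial_mem_pow K β 1 (le_trans (Nat.le_succ K) h1))
    have hv : (monomial α (1 : ℂ)) ∉ W := by
      intro hmem
      rw [hW] at hmem
      obtain ⟨g, hg, w, hw, hgw⟩ := Submodule.mem_sup.mp hmem
      rw [Submodule.restrictScalars_mem] at hg
      have hwsupp : ∀ β ∈ w.support, ¬ le β α := hw
      have hαw : α ∉ w.support := fun h => hwsupp α h (refl_of le α)
      have hgeq : g = monomial α 1 - w := by rw [← hgw]; ring
      have hgα : g.coeff α = 1 := by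
        rw [hgeq]
        simp [MvPolynomial.coeff_monomial, MvPolynomial.notMem_support_iff.mp hαw]
      have hgs : α ∈ g.support := by
        rw [MvPolynomial.mem_support_iff, hgα]; norm_num
      have hgmin : ∀ β ∈ g.support, le α β := by
        intro β hβ
        by_cases hβα : β = α
        · exact hβα ▸ refl_of le α
        · have : g.coeff β ≠ 0 := MvPolynomial.mem_support_iff.mp hβ
          have hwβ : w.coeff β ≠ 0 := by
            intro hw0
            apply this
            rw [hgeq, MvPolynomial.coeff_sub, MvPolynomial.coeff_monomial,
              if_neg (fun h => hβα h.symm), hw0, sub_zero]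
          have := hwsupp β (MvPolynomial.mem_support_iff.mpr hwβ)
          rcases total_of le β α with h | h
          · exact absurd h this
          · exact h
      -- now g ∈ I ⊔ m^K with initial exponent α; multiply by the unit u
      obtain ⟨g₁, hg₁, g₂, hg₂, hg12⟩ := Submodule.mem_sup.mp hg
      have hug : u * g ∈ I := by
        rw [← hg12, mul_add]
        exact Ideal.add_mem I (Ideal.mul_mem_left I u hg₁) (hu g₂ hg₂)
      obtain ⟨hne, hmem', hmin'⟩ := in_mul hlin hzero hadd hu0 hgs hgmin
      exact hα ⟨u * g, hug, hne, hmem', hmin'⟩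
    obtain ⟨q, hq1, hq2⟩ := sep W E hWmono _ hv
    have hqα : q.coeff α ≠ 0 := by
      rw [dapply_monomial, mul_one] at hq2
      exact hq2
    refine ⟨q, ?_, ?_, MvPolynomial.mem_support_iff.mpr hqα, ?_⟩
    · intro f hf
      refine hq1 f (Submodule.mem_sup_left ?_)
      rw [Submodule.restrictScalars_mem]
      exact (le_sup_left : I ≤ I ⊔ (mIdeal N) ^ K) hf
    · intro h0
      rw [h0] at hqα
      simp at hqα
    · intro β hβ
      by_contra hβα
      have hmon : (monomial β (1 : ℂ)) ∈ W := by
        refine Submodule.mem_sup_right ?_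
        intro γ hγ
        have := MvPolynomial.support_monomial_subset hγ
        simp only [Finset.mem_singleton] at this
        rwa [this]
      have := hq1 _ hmon
      rw [dapply_monomial, mul_one] at this
      exact MvPolynomial.mem_support_iff.mp hβ this
end
end
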